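/- arXiv:0710.3226 — 16 statements merged into one kernel-verified Lean document; each statement's English description precedes it below -/
import Mathlib

section
/- Let P₁, P₂ be two points in the Euclidean plane with dist(P₁,P₂) = δ > 0, let R > 0, and let (cₙ)ₙ∈ℤ, (rₙ)ₙ∈ℤ be a lens chain for these data. Set bₙ = 1/rₙ, and let a = b₋₁, b = b₀, c = b₁ be the curvatures of three consecutive circles of the chain. Then, with α = (a·b + b·c + c·a)/b² − 1 and β = (b² − a·c)/b, the whole sequence of curvatures satisfies bₙ₊₁ = α·bₙ − bₙ₋₁ + β for every n ∈ ℤ. -/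
private lemma dist_sq_coord (x y : EuclideanSpace ℝ (Fin 2)) :
    dist x y ^ 2 = (x 0 - y 0) ^ 2 + (x 1 - y 1) ^ 2 := by
  rw [EuclideanSpace.dist_eq, Real.sq_sqrt (by positivity)]
  simp [Fin.sum_univ_two, Real.dist_eq, sq_abs]

private lemma chain_core (d R rm r0 rp ym y0 yp : ℝ)
    (hd : 0 < d) (hR : 0 < R)
    (hrm : 0 < rm) (hr0 : 0 < r0) (hrp : 0 < rp)
    (h0 : 0 ≤ R - r0)
    (em : ym ^ 2 + d ^ 2 = (R - rm) ^ 2)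
    (e0 : y0 ^ 2 + d ^ 2 = (R - r0) ^ 2)
    (ep : yp ^ 2 + d ^ 2 = (R - rp) ^ 2)
    (tm : (y0 - ym) ^ 2 = (rm + r0) ^ 2)
    (tp : (yp - y0) ^ 2 = (r0 + rp) ^ 2)
    (hne : yp ≠ ym) :
    d ^ 2 * r0 * (rp + rm) + 4 * R * r0 * (rp * rm) = (4 * R ^ 2 - 2 * d ^ 2) * (rp * rm) ∧
    d ^ 2 * r0 ^ 2 = 4 * R * r0 * (rp * rm) + d ^ 2 * (rp * rm) := by
  have hP : y0 * yp = (R ^ 2 - d ^ 2) - R * (r0 + rp) - r0 * rp := by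
    linear_combination (e0 + ep - tp) / 2
  have hM : y0 * ym = (R ^ 2 - d ^ 2) - R * (r0 + rm) - r0 * rm := by
    linear_combination (e0 + em - tm) / 2
  have Qp : (4 * R * r0 + d ^ 2) * rp ^ 2 - 2 * r0 * (2 * R * (R - r0) - d ^ 2) * rp
      + d ^ 2 * r0 ^ 2 = 0 := by
    linear_combination (-(y0 * yp + ((R ^ 2 - d ^ 2) - R * (r0 + rp) - r0 * rp))) * hP
      + yp ^ 2 * e0 + ((R - r0) ^ 2 - d ^ 2) * ep
  have Qm : (4 * R * r0 + d ^ 2) * rm ^ 2 - 2 * r0 * (2 * R * (R - r0) - d ^ 2) * rm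
      + d ^ 2 * r0 ^ 2 = 0 := by
    linear_combination (-(y0 * ym + ((R ^ 2 - d ^ 2) - R * (r0 + rm) - r0 * rm))) * hM
      + ym ^ 2 * e0 + ((R - r0) ^ 2 - d ^ 2) * em
  have hq : (0:ℝ) < 4 * R * r0 + d ^ 2 := by positivity
  rcases eq_or_ne rp rm with heq | hne'
  · have hy0 : y0 = 0 := by
      have h1 : y0 * (yp - ym) = 0 := by linear_combination hP - hM - R * heq - r0 * heq
      rcases mul_eq_zero.mp h1 with h | h
      · exact h
      · exact absurd (sub_eq_zero.mp h) hne
    have hr0d : r0 = R - d := by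
      have h1 : (R - r0 - d) * (R - r0 + d) = 0 := by
        linear_combination -e0 + y0 * hy0
      rcases mul_eq_zero.mp h1 with h | h
      · linarith
      · linarith
    subst heq
    subst hr0d
    have hlin : (2 * R - d) * rp = d * (R - d) := by
      have key : ((2 * R - d) * rp - d * (R - d)) ^ 2 = 0 := by
        linear_combination Qp
      have h2 := sq_eq_zero_iff.mp key
      linarith
    constructor
    · linear_combination (-(2 * d * rp)) * hlin
    · linear_combination (-(d * (R - d) + (2 * R - d) * rp)) * hlin
  · have key : (rp - rm) * ((4 * R * r0 + d ^ 2) * (rp + rm)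
        - 2 * r0 * (2 * R * (R - r0) - d ^ 2)) = 0 := by
      linear_combination Qp - Qm
    have hsum : (4 * R * r0 + d ^ 2) * (rp + rm) = 2 * r0 * (2 * R * (R - r0) - d ^ 2) := by
      have h2 := (mul_eq_zero.mp key).resolve_left (sub_ne_zero.mpr hne')
      linarith [h2]
    have hprod : d ^ 2 * r0 ^ 2 = (4 * R * r0 + d ^ 2) * (rp * rm) := by
      linear_combination Qp - rp * hsum
    constructor
    · have h2 : (4 * R * r0 + d ^ 2) * (d ^ 2 * r0 * (rp + rm) + 4 * R * r0 * (rp * rm))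
          = (4 * R * r0 + d ^ 2) * ((4 * R ^ 2 - 2 * d ^ 2) * (rp * rm)) := by
        linear_combination d ^ 2 * r0 * hsum + (4 * R ^ 2 - 4 * R * r0 - 2 * d ^ 2) * hprod
      exact mul_left_cancel₀ hq.ne' h2
    · linear_combination hprod

/-- For a lens chain, with `a = b (-1)`, `b₀ = b 0`, `c = b 1` three
consecutive curvatures, the whole sequence of curvatures satisfies the inhomogeneous
three-term recurrence `b (n+1) = α * b n - b (n-1) + β` with
`α = (a·b₀ + b₀·c + c·a)/b₀² - 1` and `β = (b₀² - a·c)/b₀`. -/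
theorem lens_chain_seed_recurrence
    (P₁ P₂ : EuclideanSpace ℝ (Fin 2)) (δ R : ℝ)
    (hδ : dist P₁ P₂ = δ) (hδpos : 0 < δ) (hR : 0 < R)
    (ctr : ℤ → EuclideanSpace ℝ (Fin 2)) (r : ℤ → ℝ)
    (hr : ∀ n, 0 < r n)
    (htan₁ : ∀ n, dist (ctr n) P₁ = R - r n)
    (htan₂ : ∀ n, dist (ctr n) P₂ = R - r n)
    (hext : ∀ n, dist (ctr n) (ctr (n + 1)) = r n + r (n + 1))
    (hne : ∀ n, ctr (n + 1) ≠ ctr (n - 1))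
    (b : ℤ → ℝ) (hb : ∀ n, b n = 1 / r n)
    (a b₀ c α β : ℝ)
    (ha : a = b (-1)) (hb₀ : b₀ = b 0) (hc : c = b 1)
    (hα : α = (a * b₀ + b₀ * c + c * a) / b₀ ^ 2 - 1)
    (hβ : β = (b₀ ^ 2 - a * c) / b₀) :
    ∀ n : ℤ, b (n + 1) = α * b n - b (n - 1) + β := by
  have hδ0 : δ ≠ 0 := hδpos.ne'
  -- coordinate abbreviations
  set v0 : ℝ := P₂ 0 - P₁ 0 with hv0
  set v1 : ℝ := P₂ 1 - P₁ 1 with hv1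
  set m0 : ℝ := (P₁ 0 + P₂ 0) / 2 with hm0
  set m1 : ℝ := (P₁ 1 + P₂ 1) / 2 with hm1
  have hvv : v0 ^ 2 + v1 ^ 2 = δ ^ 2 := by
    have h := dist_sq_coord P₁ P₂
    rw [hδ] at h
    linear_combination -h
  have hA : ∀ k : ℤ, (ctr k 0 - P₁ 0) ^ 2 + (ctr k 1 - P₁ 1) ^ 2 = (R - r k) ^ 2 := by
    intro k
    rw [← dist_sq_coord, htan₁ k]
  have hB : ∀ k : ℤ, (ctr k 0 - P₂ 0) ^ 2 + (ctr k 1 - P₂ 1) ^ 2 = (R - r k) ^ 2 := by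
    intro k
    rw [← dist_sq_coord, htan₂ k]
  have hC : ∀ k : ℤ, (ctr k 0 - ctr (k+1) 0) ^ 2 + (ctr k 1 - ctr (k+1) 1) ^ 2
      = (r k + r (k+1)) ^ 2 := by
    intro k
    rw [← dist_sq_coord, hext k]
  set Y : ℤ → ℝ := fun k => (v0 * (ctr k 1 - m1) - v1 * (ctr k 0 - m0)) / δ with hY
  have hO : ∀ k : ℤ, v0 * (ctr k 0 - m0) + v1 * (ctr k 1 - m1) = 0 := by
    intro k
    linear_combination (hA k - hB k) / 2
  have hE1 : ∀ k : ℤ, (Y k) ^ 2 + (δ/2) ^ 2 = (R - r k) ^ 2 := by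
    intro k
    have key : (v0 * (ctr k 1 - m1) - v1 * (ctr k 0 - m0)) ^ 2 + (δ/2) ^ 2 * δ ^ 2
        = (R - r k) ^ 2 * δ ^ 2 := by
      linear_combination ((ctr k 0 - m0) ^ 2 + (ctr k 1 - m1) ^ 2 - δ ^ 2 / 4)
          * hvv - (v0 * (ctr k 0 - m0) + v1 * (ctr k 1 - m1) + δ ^ 2) * hO k
          + δ ^ 2 * hA k
    have key2 : (v0 * (ctr k 1 - m1) - v1 * (ctr k 0 - m0)) ^ 2
        = ((R - r k) ^ 2 - (δ/2) ^ 2) * δ ^ 2 := by linear_combination key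
    have hYk : Y k = (v0 * (ctr k 1 - m1) - v1 * (ctr k 0 - m0)) / δ := rfl
    rw [hYk, div_pow, key2, mul_div_assoc, div_self (pow_ne_zero 2 hδ0), mul_one]
    ring
  have hE2 : ∀ k : ℤ, (Y (k+1) - Y k) ^ 2 = (r k + r (k+1)) ^ 2 := by
    intro k
    have key : (v0 * (ctr (k+1) 1 - ctr k 1) - v1 * (ctr (k+1) 0 - ctr k 0)) ^ 2
        = (r k + r (k+1)) ^ 2 * δ ^ 2 := by
      linear_combination ((ctr (k+1) 0 - ctr k 0) ^ 2 + (ctr (k+1) 1 - ctr k 1) ^ 2) * hvv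
        - (v0 * (ctr (k+1) 0 - ctr k 0) + v1 * (ctr (k+1) 1 - ctr k 1)) * (hO (k+1) - hO k)
        + δ ^ 2 * hC k
    have hYd : Y (k+1) - Y k
        = (v0 * (ctr (k+1) 1 - ctr k 1) - v1 * (ctr (k+1) 0 - ctr k 0)) / δ := by
      show (v0 * (ctr (k+1) 1 - m1) - v1 * (ctr (k+1) 0 - m0)) / δ
        - (v0 * (ctr k 1 - m1) - v1 * (ctr k 0 - m0)) / δ = _
      ring
    rw [hYd, div_pow, key, mul_div_assoc, div_self (pow_ne_zero 2 hδ0), mul_one]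
  have hE3 : ∀ k : ℤ, Y (k+1) ≠ Y (k-1) := by
    intro k hEq
    apply hne k
    have hw : v0 * (ctr (k+1) 1 - ctr (k-1) 1) - v1 * (ctr (k+1) 0 - ctr (k-1) 0) = 0 := by
      have h1 : Y (k+1) - Y (k-1) = 0 := by rw [hEq]; ring
      have h2 : (v0 * (ctr (k+1) 1 - ctr (k-1) 1) - v1 * (ctr (k+1) 0 - ctr (k-1) 0))
          = (Y (k+1) - Y (k-1)) * δ := by
        show _ = ((v0 * (ctr (k+1) 1 - m1) - v1 * (ctr (k+1) 0 - m0)) / δ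
          - (v0 * (ctr (k-1) 1 - m1) - v1 * (ctr (k-1) 0 - m0)) / δ) * δ
        field_simp
        ring
      rw [h2, h1, zero_mul]
    have hv' : v0 * (ctr (k+1) 0 - ctr (k-1) 0) + v1 * (ctr (k+1) 1 - ctr (k-1) 1) = 0 := by
      linear_combination hO (k+1) - hO (k-1)
    have h00 : ctr (k+1) 0 = ctr (k-1) 0 := by
      have h3 : δ ^ 2 * (ctr (k+1) 0 - ctr (k-1) 0) = 0 := by
        linear_combination v0 * hv' - v1 * hw - (ctr (k+1) 0 - ctr (k-1) 0) * hvv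
      have := mul_eq_zero.mp h3
      rcases this with h | h
      · exact absurd h (by positivity)
      · linarith [sub_eq_zero.mp h]
    have h11 : ctr (k+1) 1 = ctr (k-1) 1 := by
      have h3 : δ ^ 2 * (ctr (k+1) 1 - ctr (k-1) 1) = 0 := by
        linear_combination v1 * hv' + v0 * hw - (ctr (k+1) 1 - ctr (k-1) 1) * hvv
      rcases mul_eq_zero.mp h3 with h | h
      · exact absurd h (by positivity)
      · linarith [sub_eq_zero.mp h]
    ext i
    fin_cases i <;> assumption
  -- main per-index sum and product relations
  have hd2 : (0:ℝ) < δ / 2 := by linarith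
  have MAIN : ∀ k : ℤ,
      ((δ/2) ^ 2 * r k * (r (k+1) + r (k-1)) + 4 * R * r k * (r (k+1) * r (k-1))
        = (4 * R ^ 2 - 2 * (δ/2) ^ 2) * (r (k+1) * r (k-1)) ∧
      (δ/2) ^ 2 * r k ^ 2 = 4 * R * r k * (r (k+1) * r (k-1))
        + (δ/2) ^ 2 * (r (k+1) * r (k-1))) := by
    intro k
    have hk1 : k - 1 + 1 = k := by ring
    have tm' : (Y k - Y (k-1)) ^ 2 = (r (k-1) + r k) ^ 2 := by
      have := hE2 (k-1)
      rw [hk1] at this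
      exact this
    have h0' : 0 ≤ R - r k := by
      rw [← htan₁ k]; exact dist_nonneg
    have hRm : 0 ≤ R - r (k-1) := by rw [← htan₁ (k-1)]; exact dist_nonneg
    exact chain_core (δ/2) R (r (k-1)) (r k) (r (k+1)) (Y (k-1)) (Y k) (Y (k+1))
      hd2 hR (hr (k-1)) (hr k) (hr (k+1)) h0'
      (hE1 (k-1)) (hE1 k) (hE1 (k+1)) tm' (hE2 k) (hE3 k)
  -- seed values
  have hrne : ∀ k : ℤ, r k ≠ 0 := fun k => (hr k).ne'
  obtain ⟨S0, P0⟩ := MAIN 0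
  have hz1 : (0:ℤ) + 1 = 1 := by ring
  have hz2 : (0:ℤ) - 1 = -1 := by ring
  rw [hz1, hz2] at S0 P0
  have hβv : β = -(16 * R) / δ ^ 2 := by
    rw [hβ, hb₀, ha, hc, hb 0, hb (-1), hb 1]
    field_simp [hrne 0, hrne 1, hrne (-1)]
    linear_combination (-4) * P0
  have hαv : α = 16 * R ^ 2 / δ ^ 2 - 2 := by
    have h1 : (r 0 * (r 1 + r (-1)) + r 0 ^ 2) * δ ^ 2 = (16 * R ^ 2 - δ ^ 2) * (r 1 * r (-1)) := by
      linear_combination 4 * S0 + 4 * P0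
    rw [hα, hb₀, ha, hc, hb 0, hb (-1), hb 1]
    field_simp [hrne 0, hrne 1, hrne (-1)]
    linear_combination h1
  intro n
  obtain ⟨Sn, Pn⟩ := MAIN n
  rw [hb, hb, hb, hαv, hβv]
  field_simp [hrne n, hrne (n+1), hrne (n-1)]
  linear_combination 4 * Sn
end

section
/- Let b : ℤ → ℚ satisfy the lens recurrence b(n+1) = α·b(n) − b(n−1) + β for all n ∈ ℤ, where b(0) ≠ 0, α = (b(−1)·b(0) + b(0)·b(1) + b(1)·b(−1))/b(0)² − 1 and β = (b(0)² − b(−1)·b(1))/b(0). Then every pair of consecutive terms satisfies the compatibility condition: for all n ∈ ℤ, b(n)² + b(n+1)² = α·b(n)·b(n+1) + β·(b(n) + b(n+1)). -/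
/-- If `b : ℤ → ℚ` satisfies the lens recurrence with constants
`α = (b(-1)·b(0) + b(0)·b(1) + b(1)·b(-1))/b(0)² - 1` and `β = (b(0)² - b(-1)·b(1))/b(0)`
(where `b 0 ≠ 0`), then every pair of consecutive terms satisfies the compatibility
condition. -/
theorem lens_recurrence_compatibility
    (b : ℤ → ℚ) (α β : ℚ) (hb0 : b 0 ≠ 0)
    (hα : α = (b (-1) * b 0 + b 0 * b 1 + b 1 * b (-1)) / (b 0) ^ 2 - 1)
    (hβ : β = ((b 0) ^ 2 - b (-1) * b 1) / b 0)
    (hrec : ∀ n : ℤ, b (n + 1) = α * b n - b (n - 1) + β) :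
    ∀ n : ℤ, (b n) ^ 2 + (b (n + 1)) ^ 2 = α * b n * b (n + 1) + β * (b n + b (n + 1)) := by
  set f : ℤ → ℚ := fun n =>
    (b n) ^ 2 + (b (n + 1)) ^ 2 - α * b n * b (n + 1) - β * (b n + b (n + 1)) with hf
  have hstep : ∀ n : ℤ, f (n + 1) = f n := by
    intro n
    have h := hrec (n + 1)
    simp only [add_sub_cancel_right] at h
    simp only [hf]
    have h2 : (n : ℤ) + 1 + 1 = n + 2 := by ring
    rw [h2] at h ⊢
    linear_combination (b (n + 2) - b n) * h
  have h0 : f 0 = 0 := by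
    simp only [hf, hα, hβ]
    field_simp
    ring
  have hall : ∀ n : ℤ, f n = 0 := by
    intro n
    induction n using Int.induction_on with
    | zero => exact h0
    | succ k ih => rw [hstep k]; exact ih
    | pred k ih => rw [← hstep (-(k:ℤ) - 1)]; simpa using ih
  intro n
  have := hall n
  simp only [hf] at this
  linarith
end

section
/- Let b : ℤ → ℚ with b(n) ≠ 0 for all n satisfy the lens recurrence b(n+1) = α·b(n) − b(n−1) + β for all n ∈ ℤ, and suppose the compatibility condition b(n₀)² + b(n₀+1)² = α·b(n₀)·b(n₀+1) + β·(b(n₀) + b(n₀+1)) holds at some index n₀. Then for every n ∈ ℤ the constants are recovered from any three consecutive terms: β = (b(n)² − b(n−1)·b(n+1))/b(n) and α = (b(n−1)·b(n) + b(n)·b(n+1) + b(n+1)·b(n−1))/b(n)² − 1. -/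
/-- If a nowhere-vanishing sequence satisfies the lens recurrence and the
compatibility condition holds at some index, then the constants `α`, `β` are recovered
from any three consecutive terms. -/
theorem lens_recurrence_constants_recovered
    (b : ℤ → ℚ) (α β : ℚ) (hb : ∀ n : ℤ, b n ≠ 0)
    (hrec : ∀ n : ℤ, b (n + 1) = α * b n - b (n - 1) + β)
    (n₀ : ℤ)
    (hcomp : (b n₀) ^ 2 + (b (n₀ + 1)) ^ 2
      = α * b n₀ * b (n₀ + 1) + β * (b n₀ + b (n₀ + 1))) :
    ∀ n : ℤ,
      β = ((b n) ^ 2 - b (n - 1) * b (n + 1)) / b n ∧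
      α = (b (n - 1) * b n + b n * b (n + 1) + b (n + 1) * b (n - 1)) / (b n) ^ 2 - 1 := by
  set P : ℤ → Prop := fun n =>
    (b n) ^ 2 + (b (n + 1)) ^ 2 = α * b n * b (n + 1) + β * (b n + b (n + 1)) with hP
  have fwd : ∀ n : ℤ, P n → P (n + 1) := by
    intro n hn
    have h2 := hrec (n + 1)
    simp only [add_sub_cancel_right] at h2
    simp only [hP] at hn ⊢
    linear_combination hn + (b (n + 1 + 1) - b n) * h2
  have bwd : ∀ n : ℤ, P n → P (n - 1) := by
    intro n hn
    have h2 := hrec n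
    simp only [hP] at hn ⊢
    rw [sub_add_cancel]
    linear_combination hn + (b (n - 1) - b (n + 1)) * h2
  have hall : ∀ n : ℤ, P n := by
    have key : ∀ m : ℤ, P (n₀ + m) := by
      intro m
      induction m using Int.induction_on with
      | zero => simpa [hP] using hcomp
      | succ k ih => have := fwd _ ih; rwa [add_assoc] at this
      | pred k ih =>
        have := bwd _ ih
        rwa [show n₀ + (-(k:ℤ)) - 1 = n₀ + (-(k:ℤ) - 1) by ring] at this
    intro n
    have := key (n - n₀)
    rwa [show n₀ + (n - n₀) = n by ring] at this
  intro n
  have hPn := hall (n - 1)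
  simp only [hP] at hPn
  rw [sub_add_cancel] at hPn
  have h2 := hrec n
  have hbn := hb n
  have hβ : β * b n = b n ^ 2 - b (n - 1) * b (n + 1) := by
    linear_combination b (n - 1) * h2 - hPn
  have hα : α * b n ^ 2
      = b (n - 1) * b n + b n * b (n + 1) + b (n + 1) * b (n - 1) - b n ^ 2 := by
    linear_combination (-(b n)) * h2 - hβ
  constructor
  · rw [eq_div_iff hbn]; linear_combination hβ
  · rw [eq_sub_iff_add_eq, eq_div_iff (pow_ne_zero 2 hbn)]
    linear_combination hα
end

section
/- Let b : ℤ → ℝ satisfy the lens recurrence b(n+1) = α·b(n) − b(n−1) + β for all n ∈ ℤ, with α > 2. Set w = (b(−1) − 2·b(0) + b(1))/(2(α − 2)) + (b(1) − b(−1))/(2·√(α² − 4)) and assume w > 0. Then the ratios of consecutive terms converge: b(n+1)/b(n) → (α + √(α² − 4))/2 as n → +∞. -/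
open Filter

/-- If `α > 2` and the Binet coefficient `w` is positive, then the ratios of
consecutive terms of a lens sequence converge to the characteristic constant
`λ = (α + √(α² - 4))/2`. -/
theorem lens_recurrence_ratio_limit
    (b : ℤ → ℝ) (α β : ℝ)
    (hrec : ∀ n : ℤ, b (n + 1) = α * b n - b (n - 1) + β)
    (hα : α > 2)
    (w : ℝ)
    (hw : w = (b (-1) - 2 * b 0 + b 1) / (2 * (α - 2))
      + (b 1 - b (-1)) / (2 * Real.sqrt (α ^ 2 - 4)))
    (hwpos : w > 0) :
    Filter.Tendsto (fun n : ℤ => b (n + 1) / b n) Filter.atTop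
      (nhds ((α + Real.sqrt (α ^ 2 - 4)) / 2)) := by
  set s : ℝ := Real.sqrt (α ^ 2 - 4) with hs_def
  have hα2 : (0:ℝ) < α ^ 2 - 4 := by nlinarith
  have hs2 : s ^ 2 = α ^ 2 - 4 := Real.sq_sqrt hα2.le
  have hs0 : 0 < s := Real.sqrt_pos.2 hα2
  set l : ℝ := (α + s) / 2 with hl_def
  set m : ℝ := (α - s) / 2 with hm_def
  have hsum : l + m = α := by rw [hl_def, hm_def]; ring
  have hlm : l * m = 1 := by rw [hl_def, hm_def]; nlinarith [hs2]
  have hl1 : 1 < l := by rw [hl_def]; nlinarith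
  have hl0 : l ≠ 0 := by intro h; rw [h] at hlm; simp at hlm
  have hmpos : 0 < m := by nlinarith [hlm, hl1]
  have hm0 : m ≠ 0 := ne_of_gt hmpos
  have hm1 : m < 1 := by nlinarith [hlm, hl1]
  have hα2' : α - 2 ≠ 0 := sub_ne_zero.2 (ne_of_gt hα)
  have h2α : (2:ℝ) - α ≠ 0 := sub_ne_zero.2 (ne_of_lt hα)
  set p : ℝ := β / (2 - α) with hp_def
  set w' : ℝ := (b (-1) - 2 * b 0 + b 1) / (2 * (α - 2))
      - (b 1 - b (-1)) / (2 * s) with hw'_def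
  set f : ℤ → ℝ := fun n => w * l ^ n + w' * m ^ n + p with hf_def
  have h10 : b 1 = α * b 0 - b (-1) + β := by
    have := hrec 0
    norm_num at this
    exact this
  have hp : (2 - α) * p = β := by
    rw [hp_def]; field_simp
  have hf0 : f 0 = b 0 := by
    simp only [hf_def, zpow_zero, mul_one, hw, hw'_def, hp_def]
    rw [h10]
    field_simp
    ring
  have hf1 : f 1 = b 1 := by
    simp only [hf_def, zpow_one, hw, hw'_def, hp_def, hl_def, hm_def]
    rw [h10]
    field_simp
    ring_nf
  have hlinv : l⁻¹ = m := (eq_inv_of_mul_eq_one_left (by rw [mul_comm]; exact hlm)).symm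
  have hminv : m⁻¹ = l := (eq_inv_of_mul_eq_one_left hlm).symm
  have hfrec : ∀ n : ℤ, f (n + 1) = α * f n - f (n - 1) + β := by
    intro n
    simp only [hf_def, zpow_add_one₀ hl0, zpow_sub_one₀ hl0, zpow_add_one₀ hm0,
      zpow_sub_one₀ hm0, hlinv, hminv]
    linear_combination (w * l ^ n + w' * m ^ n) * hsum + hp
  -- b = f everywhere
  have hbinet : ∀ n : ℤ, b n = f n := by
    have hg0 : b 0 - f 0 = 0 := by rw [hf0]; ring
    have hg1 : b 1 - f 1 = 0 := by rw [hf1]; ring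
    have hgrec : ∀ n : ℤ, b (n + 1) - f (n + 1)
        = α * (b n - f n) - (b (n - 1) - f (n - 1)) := by
      intro n
      rw [hrec n, hfrec n]; ring
    have hup : ∀ n : ℤ, 0 ≤ n → b n - f n = 0 ∧ b (n + 1) - f (n + 1) = 0 := by
      refine Int.le_induction ⟨hg0, hg1⟩ ?_
      rintro k hk ⟨h1, h2⟩
      refine ⟨h2, ?_⟩
      have h3 := hgrec (k + 1)
      simp only [add_sub_cancel_right] at h3
      rw [h3, h1, h2]; ring
    have hdown : ∀ n : ℤ, n ≤ 0 → b n - f n = 0 ∧ b (n + 1) - f (n + 1) = 0 := by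
      refine Int.le_induction_down ⟨hg0, hg1⟩ ?_
      rintro k hk ⟨h1, h2⟩
      have h3 := hgrec k
      rw [h1, h2] at h3
      constructor
      · linarith
      · simpa using h1
    intro n
    have hgn : b n - f n = 0 := by
      rcases le_or_gt 0 n with h | h
      · exact (hup n h).1
      · exact (hdown n h.le).1
    linarith
  have hprod : ∀ n : ℤ, l ^ n * m ^ n = 1 := by
    intro n; rw [← mul_zpow, hlm, one_zpow]
  set num : ℤ → ℝ := fun n => w * l + w' * m * (m ^ n) ^ 2 + p * m ^ n with hnum_def
  set den : ℤ → ℝ := fun n => w + w' * (m ^ n) ^ 2 + p * m ^ n with hden_def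
  have hratio : ∀ n : ℤ, b (n + 1) / b n = num n / den n := by
    intro n
    have h1 : b (n + 1) = l ^ n * num n := by
      rw [hbinet, hf_def]
      simp only [zpow_add_one₀ hl0, zpow_add_one₀ hm0, hnum_def]
      linear_combination (-(w' * m * m ^ n + p)) * hprod n
    have h2 : b n = l ^ n * den n := by
      rw [hbinet, hf_def]
      simp only [hden_def]
      linear_combination (-(w' * m ^ n + p)) * hprod n
    rw [h1, h2, mul_div_mul_left _ _ (zpow_ne_zero n hl0)]
  have htn : Tendsto Int.toNat atTop atTop :=
    tendsto_atTop_atTop.2 fun k => ⟨(k : ℤ), fun a ha => by omega⟩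
  have hT : Tendsto (fun n : ℤ => m ^ n) atTop (nhds 0) := by
    have h1 : Tendsto (fun n : ℤ => m ^ n.toNat) atTop (nhds 0) :=
      (tendsto_pow_atTop_nhds_zero_of_lt_one hmpos.le hm1).comp htn
    refine h1.congr' ?_
    filter_upwards [eventually_ge_atTop (0 : ℤ)] with n hn
    rw [← zpow_natCast, Int.toNat_of_nonneg hn]
  have hnum : Tendsto num atTop (nhds (w * l)) := by
    have h : Tendsto (fun n : ℤ => w * l + w' * m * (m ^ n) ^ 2 + p * m ^ n) atTop
        (nhds (w * l + w' * m * 0 ^ 2 + p * 0)) :=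
      ((tendsto_const_nhds.add (tendsto_const_nhds.mul (hT.pow 2))).add
        (tendsto_const_nhds.mul hT))
    rw [hnum_def]
    simpa using h
  have hden : Tendsto den atTop (nhds w) := by
    have h : Tendsto (fun n : ℤ => w + w' * (m ^ n) ^ 2 + p * m ^ n) atTop
        (nhds (w + w' * 0 ^ 2 + p * 0)) :=
      ((tendsto_const_nhds.add (tendsto_const_nhds.mul (hT.pow 2))).add
        (tendsto_const_nhds.mul hT))
    rw [hden_def]
    simpa using h
  have hfinal : Tendsto (fun n : ℤ => num n / den n) atTop (nhds (w * l / w)) :=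
    hnum.div hden (ne_of_gt hwpos)
  have hwl : w * l / w = l := by
    rw [mul_comm, mul_div_assoc, div_self (ne_of_gt hwpos), mul_one]
  rw [← hwl]
  exact hfinal.congr fun n => (hratio n).symm
end

section
/- Let b : ℤ → ℝ satisfy the lens recurrence b(n+1) = α·b(n) − b(n−1) + β for all n ∈ ℤ and the compatibility condition b(n₀)² + b(n₀+1)² = α·b(n₀)·b(n₀+1) + β·(b(n₀) + b(n₀+1)) at some index n₀. Assume α > 2, β < 0, and b(n) > 0 for all n ∈ ℤ. Then the family (1/b(n))ₙ∈ℤ is summable and ∑_{n∈ℤ} 1/b(n) = √(α² − 4)/(−β). -/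
set_option maxHeartbeats 1000000 in
/-- For a positive lens sequence with `α > 2` and `β < 0`, the reciprocals
are summable over `ℤ` and their sum equals `√(α² - 4)/(-β)`. -/
theorem lens_recurrence_sum_of_reciprocals
    (b : ℤ → ℝ) (α β : ℝ)
    (hrec : ∀ n : ℤ, b (n + 1) = α * b n - b (n - 1) + β)
    (n₀ : ℤ)
    (hcomp : (b n₀) ^ 2 + (b (n₀ + 1)) ^ 2
      = α * b n₀ * b (n₀ + 1) + β * (b n₀ + b (n₀ + 1)))
    (hα : α > 2) (hβ : β < 0) (hb : ∀ n : ℤ, b n > 0) :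
    Summable (fun n : ℤ => 1 / b n) ∧
      ∑' n : ℤ, 1 / b n = Real.sqrt (α ^ 2 - 4) / (-β) := by
  have hβne : β ≠ 0 := ne_of_lt hβ
  have hbne : ∀ n : ℤ, b n ≠ 0 := fun n => ne_of_gt (hb n)
  have hDpos : (0:ℝ) < α ^ 2 - 4 := by nlinarith
  obtain ⟨s, hs_def⟩ : ∃ x : ℝ, x = Real.sqrt (α ^ 2 - 4) := ⟨_, rfl⟩
  have hs2 : s ^ 2 = α ^ 2 - 4 := by rw [hs_def]; exact Real.sq_sqrt hDpos.le
  have hspos : 0 < s := by rw [hs_def]; exact Real.sqrt_pos.mpr hDpos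
  have hsne : s ≠ 0 := ne_of_gt hspos
  obtain ⟨l, hl_def⟩ : ∃ x : ℝ, x = (α + s) / 2 := ⟨_, rfl⟩
  obtain ⟨m, hm_def⟩ : ∃ x : ℝ, x = (α - s) / 2 := ⟨_, rfl⟩
  have hsum : l + m = α := by rw [hl_def, hm_def]; ring
  have hdiff : l - m = s := by rw [hl_def, hm_def]; ring
  have hlm : l * m = 1 := by rw [hl_def, hm_def]; nlinarith [hs2]
  have hmpos : 0 < m := by rw [hm_def]; nlinarith [hs2, hspos]
  have hlpos : 1 < l := by rw [hl_def]; nlinarith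
  have hl0 : (0:ℝ) < l := by linarith
  have hlne : l ≠ 0 := ne_of_gt hl0
  have hmne : m ≠ 0 := ne_of_gt hmpos
  have hm1 : m < 1 := by nlinarith
  have hinvl : l⁻¹ = m := by field_simp; linarith [hlm]
  have hinvm : m⁻¹ = l := by field_simp; nlinarith [hlm]
  have hl2 : l ^ 2 = α * l - 1 := by linear_combination l * hsum - hlm
  have hm2 : m ^ 2 = α * m - 1 := by linear_combination m * hsum - hlm
  obtain ⟨c, hc_def⟩ : ∃ x : ℝ, x = β / (2 - α) := ⟨_, rfl⟩
  have h2α : (2 - α) ≠ 0 := by intro h; linarith [hα]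
  have hc : c * (2 - α) = β := by rw [hc_def]; field_simp
  have hcpos : 0 < c := by
    rw [hc_def]; exact div_pos_of_neg_of_neg hβ (by linarith)
  obtain ⟨A, hA_def⟩ : ∃ x : ℝ, x = ((b 1 - c) - m * (b 0 - c)) / s := ⟨_, rfl⟩
  obtain ⟨B, hB_def⟩ : ∃ x : ℝ, x = (l * (b 0 - c) - (b 1 - c)) / s := ⟨_, rfl⟩
  have hAs : A * s = (b 1 - c) - m * (b 0 - c) := by rw [hA_def]; field_simp
  have hBs : B * s = l * (b 0 - c) - (b 1 - c) := by rw [hB_def]; field_simp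
  -- closed form
  have hrec' : ∀ n : ℤ, b (n - 1) = α * b n - b (n + 1) + β := by
    intro n; have := hrec n; linarith
  have closed : ∀ n : ℤ, b n = A * l ^ n + B * m ^ n + c ∧
      b (n + 1) = A * l ^ (n + 1) + B * m ^ (n + 1) + c := by
    intro n
    induction n using Int.induction_on with
    | zero =>
      have hb0 : b 0 = A + B + c := by
        have h1 : (A + B) * s = (l - m) * (b 0 - c) := by
          rw [add_mul, hAs, hBs]; ring
        rw [hdiff] at h1
        have h2 := mul_right_cancel₀ hsne (h1.trans (by ring : s * (b 0 - c) = (b 0 - c) * s))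
        linarith
      have hb1 : b 1 = A * l + B * m + c := by
        have h1 : (A * l + B * m) * s = (l - m) * (b 1 - c) := by
          have e : (A * l + B * m) * s = (A * s) * l + (B * s) * m := by ring
          rw [e, hAs, hBs]; ring
        rw [hdiff] at h1
        have h2 := mul_right_cancel₀ hsne (h1.trans (by ring : s * (b 1 - c) = (b 1 - c) * s))
        linarith
      constructor
      · simpa using hb0
      · norm_num
        simpa using hb1
    | succ i ih =>
      refine ⟨ih.2, ?_⟩
      have hr := hrec ((i : ℤ) + 1)
      have hidx : ((i : ℤ) + 1) - 1 = (i : ℤ) := by ring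
      rw [hidx] at hr
      rw [hr, ih.1, ih.2]
      rw [zpow_add_one₀ hlne ((i:ℤ)+1), zpow_add_one₀ hmne ((i:ℤ)+1),
        zpow_add_one₀ hlne (i:ℤ), zpow_add_one₀ hmne (i:ℤ)]
      linear_combination (-(A * l ^ (i:ℤ))) * hl2 - (B * m ^ (i:ℤ)) * hm2 - hc
    | pred i ih =>
      have hr := hrec' (-(i : ℤ))
      have hstep : b (-(i:ℤ) - 1) = A * l ^ (-(i:ℤ) - 1) + B * m ^ (-(i:ℤ) - 1) + c := by
        rw [hr, ih.1, ih.2]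
        rw [zpow_sub_one₀ hlne (-(i:ℤ)), zpow_sub_one₀ hmne (-(i:ℤ)),
          zpow_add_one₀ hlne (-(i:ℤ)), zpow_add_one₀ hmne (-(i:ℤ))]
        rw [hinvl, hinvm]
        linear_combination (-(A * l ^ (-(i:ℤ)) + B * m ^ (-(i:ℤ)))) * hsum - hc
      refine ⟨hstep, ?_⟩
      have he : (-(i:ℤ) - 1) + 1 = -(i:ℤ) := by ring
      rw [he]; exact ih.1
  have closed1 : ∀ n : ℤ, b n = A * l ^ n + B * m ^ n + c := fun n => (closed n).1
  -- invariance of Q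
  have hQstep : ∀ n : ℤ,
      (b (n+1))^2 + (b (n+1+1))^2 - α * b (n+1) * b (n+1+1) - β * (b (n+1) + b (n+1+1))
      = (b n)^2 + (b (n+1))^2 - α * b n * b (n+1) - β * (b n + b (n+1)) := by
    intro n
    have hr := hrec (n + 1)
    have hidx : (n + 1) - 1 = n := by ring
    rw [hidx] at hr
    linear_combination (b (n+1+1) - b n) * hr
  have hQ0 : ∀ n : ℤ,
      (b n)^2 + (b (n+1))^2 - α * b n * b (n+1) - β * (b n + b (n+1))
      = (b 0)^2 + (b 1)^2 - α * b 0 * b 1 - β * (b 0 + b 1) := by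
    intro n
    induction n using Int.induction_on with
    | zero => norm_num
    | succ i ih => rw [hQstep (i:ℤ)]; exact ih
    | pred i ih =>
      have hst := hQstep (-(i:ℤ) - 1)
      have hidx : (-(i:ℤ) - 1) + 1 = -(i:ℤ) := by ring
      rw [hidx] at hst ⊢
      rw [← hst]
      exact ih
  have hQzero : ∀ n : ℤ,
      (b n)^2 + (b (n+1))^2 - α * b n * b (n+1) - β * (b n + b (n+1)) = 0 := by
    intro n
    rw [hQ0 n, ← hQ0 n₀]
    linear_combination hcomp
  -- key identity
  have key : ∀ n : ℤ, b n * b n - β * b n = b (n - 1) * b (n + 1) := by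
    intro n
    have hq := hQzero n
    have hr := hrec' n
    linear_combination hq - b (n + 1) * hr
  -- telescoping function
  obtain ⟨h, hh_def⟩ : ∃ f : ℤ → ℝ, f = fun n => s * (β - b (n - 1)) / (β * b n) :=
    ⟨_, rfl⟩
  have hh : ∀ n : ℤ, h n = s * (β - b (n - 1)) / (β * b n) := fun n => by rw [hh_def]
  have tele : ∀ n : ℤ, h n - h (n + 1) = s / b n := by
    intro n
    have e2 : h (n + 1) = s * (β - b n) / (β * b (n + 1)) := by
      rw [hh (n + 1)]
      have e : (n + 1) - 1 = n := by ring
      rw [e]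
    rw [hh n, e2]
    have hk := key n
    rw [div_sub_div _ _ (mul_ne_zero hβne (hbne n)) (mul_ne_zero hβne (hbne (n+1))),
      div_eq_div_iff (mul_ne_zero (mul_ne_zero hβne (hbne n)) (mul_ne_zero hβne (hbne (n+1)))) (hbne n)]
    linear_combination (s * β * b n) * hk
  -- natural-index closed forms
  have hbnat : ∀ N : ℕ, b (N : ℤ) = A * l ^ N + B * m ^ N + c := by
    intro N
    rw [closed1 (N : ℤ), zpow_natCast, zpow_natCast]
  have hbneg : ∀ N : ℕ, b (-(N : ℤ)) = A * m ^ N + B * l ^ N + c := by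
    intro N
    rw [closed1 (-(N : ℤ)), zpow_neg, zpow_neg, zpow_natCast, zpow_natCast,
      ← inv_pow, ← inv_pow, hinvl, hinvm]
  -- the product relation
  have hq0 := hQzero 0
  norm_num at hq0
  have habs2 : A * B * s ^ 2 = c ^ 2 * (α - 2) := by
    have e : A * B * s ^ 2 = (A * s) * (B * s) := by ring
    rw [e, hAs, hBs]
    linear_combination (-1) * hq0 + ((b 0 - c) * (b 1 - c)) * hsum
      - (b 0 - c) ^ 2 * hlm + ((b 0 - c) + (b 1 - c) + 2 * c) * hc
  have hABpos : 0 < A * B := by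
    have h1 : 0 < c ^ 2 * (α - 2) := mul_pos (pow_pos hcpos 2) (by linarith)
    have h2 : 0 < A * B * s ^ 2 := habs2 ▸ h1
    have e : A * B = (A * B * s ^ 2) / s ^ 2 := by field_simp
    rw [e]
    exact div_pos h2 (pow_pos hspos 2)
  -- A and B are nonnegative, hence positive
  have hA0 : 0 ≤ A := by
    by_contra hA
    push_neg at hA
    obtain ⟨N, hN⟩ := pow_unbounded_of_one_lt ((|B| + c) / (-A)) hlpos
    have hbN := hb (N : ℤ)
    rw [hbnat N] at hbN
    have hm_le : B * m ^ N ≤ |B| := by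
      calc B * m ^ N ≤ |B| * m ^ N :=
            mul_le_mul_of_nonneg_right (le_abs_self B) (pow_nonneg hmpos.le N)
        _ ≤ |B| * 1 := mul_le_mul_of_nonneg_left
            (pow_le_one₀ hmpos.le hm1.le) (abs_nonneg B)
        _ = |B| := mul_one _
    have hdiv := (div_lt_iff₀ (by linarith : (0:ℝ) < -A)).mp hN
    linarith [hbN, hm_le, hdiv]
  have hB0 : 0 ≤ B := by
    by_contra hB
    push_neg at hB
    obtain ⟨N, hN⟩ := pow_unbounded_of_one_lt ((|A| + c) / (-B)) hlpos
    have hbN := hb (-(N : ℤ))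
    rw [hbneg N] at hbN
    have hm_le : A * m ^ N ≤ |A| := by
      calc A * m ^ N ≤ |A| * m ^ N :=
            mul_le_mul_of_nonneg_right (le_abs_self A) (pow_nonneg hmpos.le N)
        _ ≤ |A| * 1 := mul_le_mul_of_nonneg_left
            (pow_le_one₀ hmpos.le hm1.le) (abs_nonneg A)
        _ = |A| := mul_one _
    have hdiv := (div_lt_iff₀ (by linarith : (0:ℝ) < -B)).mp hN
    linarith [hbN, hm_le, hdiv]
  have hApos : 0 < A := by
    rcases hA0.lt_or_eq with h | h
    · exact h
    · exfalso; rw [← h] at hABpos; simp at hABpos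
  have hBpos : 0 < B := by
    rcases hB0.lt_or_eq with h | h
    · exact h
    · exfalso; rw [← h] at hABpos; simp at hABpos
  have hpow1 : ∀ N : ℕ, l ^ N * m ^ N = 1 := by
    intro N; rw [← mul_pow, hlm, one_pow]
  -- representation of h along ℕ
  have hrep : ∀ N : ℕ, h (N : ℤ) =
      s * (β * m ^ N - A * m - B * l * (m ^ 2) ^ N - c * m ^ N) /
        (β * (A + B * (m ^ 2) ^ N + c * m ^ N)) := by
    intro N
    have hbN1 : b ((N : ℤ) - 1) = A * l ^ N * m + B * m ^ N * l + c := by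
      rw [closed1 ((N : ℤ) - 1), zpow_sub_one₀ hlne, zpow_sub_one₀ hmne,
        hinvl, hinvm, zpow_natCast, zpow_natCast]
      ring
    have e1 : s * (β * m ^ N - A * m - B * l * (m ^ 2) ^ N - c * m ^ N)
        = m ^ N * (s * (β - b ((N : ℤ) - 1))) := by
      rw [hbN1]; linear_combination (s * A * m) * hpow1 N
    have e2 : β * (A + B * (m ^ 2) ^ N + c * m ^ N) = m ^ N * (β * b (N : ℤ)) := by
      rw [hbnat N]; linear_combination (-(β * A)) * hpow1 N
    rw [hh (N : ℤ), e1, e2, mul_div_mul_left _ _ (pow_ne_zero N hmne)]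
  have hrepneg : ∀ N : ℕ, h (-(N : ℤ)) =
      s * (β * m ^ N - A * m * (m ^ 2) ^ N - B * l - c * m ^ N) /
        (β * (A * (m ^ 2) ^ N + B + c * m ^ N)) := by
    intro N
    have hbN1 : b (-(N : ℤ) - 1) = A * m ^ N * m + B * l ^ N * l + c := by
      rw [closed1 (-(N : ℤ) - 1), zpow_sub_one₀ hlne, zpow_sub_one₀ hmne,
        hinvl, hinvm, zpow_neg, zpow_neg, zpow_natCast, zpow_natCast,
        ← inv_pow, ← inv_pow, hinvl, hinvm]
      ring
    have e1 : s * (β * m ^ N - A * m * (m ^ 2) ^ N - B * l - c * m ^ N)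
        = m ^ N * (s * (β - b (-(N : ℤ) - 1))) := by
      rw [hbN1]; linear_combination (s * B * l) * hpow1 N
    have e2 : β * (A * (m ^ 2) ^ N + B + c * m ^ N) = m ^ N * (β * b (-(N : ℤ))) := by
      rw [hbneg N]; linear_combination (-(β * B)) * hpow1 N
    rw [hh (-(N : ℤ)), e1, e2, mul_div_mul_left _ _ (pow_ne_zero N hmne)]
  -- limits
  have hm2lt : m ^ 2 < 1 := by nlinarith
  have t1 : Filter.Tendsto (fun N : ℕ => m ^ N) Filter.atTop (nhds 0) :=
    tendsto_pow_atTop_nhds_zero_of_lt_one hmpos.le hm1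
  have t2 : Filter.Tendsto (fun N : ℕ => (m ^ 2) ^ N) Filter.atTop (nhds 0) :=
    tendsto_pow_atTop_nhds_zero_of_lt_one (by positivity) hm2lt
  have tposL : Filter.Tendsto (fun N : ℕ => h (N : ℤ)) Filter.atTop (nhds (-(s * m) / β)) := by
    have tnum : Filter.Tendsto
        (fun N : ℕ => s * (β * m ^ N - A * m - B * l * (m ^ 2) ^ N - c * m ^ N))
        Filter.atTop (nhds (s * (β * 0 - A * m - B * l * 0 - c * 0))) :=
      ((((t1.const_mul β).sub tendsto_const_nhds).sub
        (t2.const_mul (B * l))).sub (t1.const_mul c)).const_mul s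
    have tden : Filter.Tendsto
        (fun N : ℕ => β * (A + B * (m ^ 2) ^ N + c * m ^ N))
        Filter.atTop (nhds (β * (A + B * 0 + c * 0))) :=
      ((tendsto_const_nhds.add (t2.const_mul B)).add (t1.const_mul c)).const_mul β
    have hdne : β * (A + B * 0 + c * 0) ≠ 0 := by
      have : β * (A + B * 0 + c * 0) = β * A := by ring
      rw [this]
      exact mul_ne_zero hβne (ne_of_gt hApos)
    have tL := tnum.div tden hdne
    have hval : s * (β * 0 - A * m - B * l * 0 - c * 0) / (β * (A + B * 0 + c * 0))
        = -(s * m) / β := by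
      field_simp
      ring
    rw [hval] at tL
    exact tL.congr fun N => (hrep N).symm
  have tposM : Filter.Tendsto (fun N : ℕ => h (-(N : ℤ))) Filter.atTop
      (nhds (-(s * l) / β)) := by
    have tnum : Filter.Tendsto
        (fun N : ℕ => s * (β * m ^ N - A * m * (m ^ 2) ^ N - B * l - c * m ^ N))
        Filter.atTop (nhds (s * (β * 0 - A * m * 0 - B * l - c * 0))) :=
      ((((t1.const_mul β).sub (t2.const_mul (A * m))).sub
        tendsto_const_nhds).sub (t1.const_mul c)).const_mul s
    have tden : Filter.Tendsto
        (fun N : ℕ => β * (A * (m ^ 2) ^ N + B + c * m ^ N))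
        Filter.atTop (nhds (β * (A * 0 + B + c * 0))) :=
      (((t2.const_mul A).add tendsto_const_nhds).add (t1.const_mul c)).const_mul β
    have hdne : β * (A * 0 + B + c * 0) ≠ 0 := by
      have : β * (A * 0 + B + c * 0) = β * B := by ring
      rw [this]
      exact mul_ne_zero hβne (ne_of_gt hBpos)
    have tM := tnum.div tden hdne
    have hval : s * (β * 0 - A * m * 0 - B * l - c * 0) / (β * (A * 0 + B + c * 0))
        = -(s * l) / β := by
      field_simp
      ring
    rw [hval] at tM
    exact tM.congr fun N => (hrepneg N).symm
  -- partial sums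
  have tele' : ∀ n : ℤ, 1 / b n = (h n - h (n + 1)) / s := by
    intro n
    rw [tele n, div_right_comm, div_self hsne]
  have psum1 : ∀ N : ℕ, ∑ i ∈ Finset.range N, (1 / b (i : ℤ)) = (h 0 - h (N : ℤ)) / s := by
    intro N
    induction N with
    | zero => simp
    | succ N ih =>
      rw [Finset.sum_range_succ, ih, tele' (N : ℤ)]
      push_cast
      ring
  have psum2 : ∀ N : ℕ, ∑ i ∈ Finset.range N, (1 / b (-((i : ℤ) + 1)))
      = (h (-(N : ℤ)) - h 0) / s := by
    intro N
    induction N with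
    | zero => simp
    | succ N ih =>
      rw [Finset.sum_range_succ, ih, tele' (-((N : ℤ) + 1))]
      have e : -((N : ℤ) + 1) + 1 = -(N : ℤ) := by ring
      rw [e]
      push_cast
      ring_nf
  -- HasSum on both halves
  have hs1 : HasSum (fun n : ℕ => 1 / b (n : ℤ)) ((h 0 - (-(s * m) / β)) / s) := by
    rw [hasSum_iff_tendsto_nat_of_nonneg (fun i => div_nonneg zero_le_one (hb _).le)]
    have tt : Filter.Tendsto (fun N : ℕ => (h 0 - h (N : ℤ)) / s) Filter.atTop
        (nhds ((h 0 - (-(s * m) / β)) / s)) :=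
      (tendsto_const_nhds.sub tposL).div_const s
    exact tt.congr fun N => (psum1 N).symm
  have hs2' : HasSum (fun n : ℕ => 1 / b (-((n : ℤ) + 1))) ((-(s * l) / β - h 0) / s) := by
    rw [hasSum_iff_tendsto_nat_of_nonneg (fun i => div_nonneg zero_le_one (hb _).le)]
    have tt : Filter.Tendsto (fun N : ℕ => (h (-(N : ℤ)) - h 0) / s) Filter.atTop
        (nhds ((-(s * l) / β - h 0) / s)) :=
      (tposM.sub tendsto_const_nhds).div_const s
    exact tt.congr fun N => (psum2 N).symm
  have hfin : HasSum (fun n : ℤ => 1 / b n)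
      ((h 0 - (-(s * m) / β)) / s + (-(s * l) / β - h 0) / s) :=
    HasSum.of_nat_of_neg_add_one hs1 hs2'
  have hvalue : (h 0 - (-(s * m) / β)) / s + (-(s * l) / β - h 0) / s = s / (-β) := by
    have e1 : (h 0 - (-(s * m) / β)) / s + (-(s * l) / β - h 0) / s
        = ((m - l) / β) * (s / s) := by ring
    rw [e1, div_self hsne, mul_one, div_eq_div_iff hβne (neg_ne_zero.mpr hβne)]
    linear_combination β * hdiff
  rw [hvalue] at hfin
  refine ⟨hfin.summable, ?_⟩
  rw [hfin.tsum_eq, hs_def]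
end

section
/- Let b : ℤ → ℚ with b(n) ≠ 0 for all n satisfy the lens recurrence b(n+1) = α·b(n) − b(n−1) + β for all n ∈ ℤ, and suppose the compatibility condition b(n₀)² + b(n₀+1)² = α·b(n₀)·b(n₀+1) + β·(b(n₀) + b(n₀+1)) holds at some index n₀. Then for every n ∈ ℤ: b(n−1)/b(n) + b(n+2)/b(n+1) = α; equivalently, b(n−1)·b(n+1) + b(n)·b(n+2) = α·b(n)·b(n+1). -/
/-- For a nowhere-vanishing lens sequence satisfying the compatibility
condition at some index, `b (n-1)/b n + b (n+2)/b (n+1) = α` for all `n`, and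
equivalently `b (n-1) * b (n+1) + b n * b (n+2) = α * b n * b (n+1)`. -/
theorem lens_recurrence_alpha_four_terms
    (b : ℤ → ℚ) (α β : ℚ) (hb : ∀ n : ℤ, b n ≠ 0)
    (hrec : ∀ n : ℤ, b (n + 1) = α * b n - b (n - 1) + β)
    (n₀ : ℤ)
    (hcomp : (b n₀) ^ 2 + (b (n₀ + 1)) ^ 2
      = α * b n₀ * b (n₀ + 1) + β * (b n₀ + b (n₀ + 1))) :
    ∀ n : ℤ, b (n - 1) / b n + b (n + 2) / b (n + 1) = α ∧
      b (n - 1) * b (n + 1) + b n * b (n + 2) = α * b n * b (n + 1) := by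
  -- compatibility holds at every index
  have key : ∀ n : ℤ, (b n) ^ 2 + (b (n + 1)) ^ 2
      = α * b n * b (n + 1) + β * (b n + b (n + 1)) := by
    have step : ∀ n : ℤ,
        ((b n) ^ 2 + (b (n + 1)) ^ 2
          = α * b n * b (n + 1) + β * (b n + b (n + 1))) ↔
        ((b (n + 1)) ^ 2 + (b (n + 2)) ^ 2
          = α * b (n + 1) * b (n + 2) + β * (b (n + 1) + b (n + 2))) := by
      intro n
      have h2 := hrec (n + 1)
      have e1 : n + 1 + 1 = n + 2 := by ring
      have e2 : n + 1 - 1 = n := by ring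
      rw [e1, e2] at h2
      constructor <;> intro h
      · linear_combination h + (b (n + 2) - b n) * h2
      · linear_combination h - (b (n + 2) - b n) * h2
    have aux : ∀ k : ℤ, (b (n₀ + k)) ^ 2 + (b (n₀ + k + 1)) ^ 2
        = α * b (n₀ + k) * b (n₀ + k + 1) + β * (b (n₀ + k) + b (n₀ + k + 1)) := by
      intro k
      induction k using Int.induction_on with
      | zero => simpa using hcomp
      | succ k ih =>
        have := (step (n₀ + k)).mp ih
        have e : n₀ + k + 2 = n₀ + (k + 1) + 1 := by ring
        have e' : (n₀ : ℤ) + k + 1 = n₀ + (k + 1) := by ring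
        rw [e, e'] at this
        exact this
      | pred k ih =>
        have e2 : (n₀ : ℤ) + -(k : ℤ) + 1 = n₀ + (-(k : ℤ) - 1) + 2 := by ring
        have e : (n₀ : ℤ) + -(k : ℤ) = n₀ + (-(k : ℤ) - 1) + 1 := by ring
        rw [e2, e] at ih
        have := (step (n₀ + (-(k : ℤ) - 1))).mpr ih
        exact this
    intro n
    have := aux (n - n₀)
    have e : n₀ + (n - n₀) = n := by ring
    rw [e] at this
    exact this
  intro n
  have h1 := hrec n
  have h2 := hrec (n + 1)
  have e1 : n + 1 + 1 = n + 2 := by ring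
  have e2 : n + 1 - 1 = n := by ring
  rw [e1, e2] at h2
  have hc := key n
  have prod : b (n - 1) * b (n + 1) + b n * b (n + 2) = α * b n * b (n + 1) := by
    linear_combination b (n + 1) * h1 + b n * h2 - hc
  refine ⟨?_, prod⟩
  have hn := hb n
  have hn1 := hb (n + 1)
  field_simp
  linear_combination prod
end

section
/- Let a, b, c ∈ ℤ with b ≠ 0, and suppose b divides a·c and b² divides a·b + b·c + c·a. Then α = (a·b + b·c + c·a)/b² − 1 and β = (b² − a·c)/b are integers, and the bilateral sequence x : ℤ → ℚ determined by x(0) = a, x(1) = b and the lens recurrence x(n+1) = α·x(n) − x(n−1) + β (for all n ∈ ℤ) takes a value in ℤ at every index n ∈ ℤ. -/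
/-- Integrality Criterion 1: If `b ∣ a·c` and `b² ∣ a·b + b·c + c·a`, then
the constants `α`, `β` of the seed `(a,b,c)` are integers and the lens sequence extended
from the seed takes integer values everywhere. -/
theorem lens_sequence_integrality_criterion_one
    (a b c : ℤ) (hb : b ≠ 0)
    (h1 : b ∣ a * c) (h2 : b ^ 2 ∣ a * b + b * c + c * a) :
    (∃ A : ℤ, ((a : ℚ) * b + b * c + c * a) / (b : ℚ) ^ 2 - 1 = (A : ℚ)) ∧
    (∃ B : ℤ, ((b : ℚ) ^ 2 - (a : ℚ) * c) / (b : ℚ) = (B : ℚ)) ∧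
    ∀ x : ℤ → ℚ, x 0 = (a : ℚ) → x 1 = (b : ℚ) →
      (∀ n : ℤ, x (n + 1) = (((a : ℚ) * b + b * c + c * a) / (b : ℚ) ^ 2 - 1) * x n
        - x (n - 1) + ((b : ℚ) ^ 2 - (a : ℚ) * c) / (b : ℚ)) →
      ∀ n : ℤ, ∃ m : ℤ, x n = (m : ℚ) := by
  have hbq : (b : ℚ) ≠ 0 := Int.cast_ne_zero.mpr hb
  obtain ⟨t, ht⟩ := h2
  obtain ⟨s, hs⟩ := h1
  have hA : ((a : ℚ) * b + b * c + c * a) / (b : ℚ) ^ 2 - 1 = ((t - 1 : ℤ) : ℚ) := by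
    have : ((a : ℚ) * b + b * c + c * a) = (b : ℚ) ^ 2 * t := by
      exact_mod_cast congrArg (Int.cast : ℤ → ℚ) ht
    rw [this]
    push_cast
    field_simp
  have hB : ((b : ℚ) ^ 2 - (a : ℚ) * c) / (b : ℚ) = ((b - s : ℤ) : ℚ) := by
    have : (a : ℚ) * c = (b : ℚ) * s := by exact_mod_cast congrArg (Int.cast : ℤ → ℚ) hs
    rw [this]
    push_cast
    field_simp
  refine ⟨⟨t - 1, hA⟩, ⟨b - s, hB⟩, ?_⟩
  intro x hx0 hx1 hrec
  have hrec' : ∀ n : ℤ, x (n + 1) = ((t - 1 : ℤ) : ℚ) * x n - x (n - 1) + ((b - s : ℤ) : ℚ) := by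
    intro n; rw [hrec n, hA, hB]
  have fwd : ∀ k : ℕ, (∃ m : ℤ, x k = m) ∧ (∃ m : ℤ, x (k + 1) = m) := by
    intro k
    induction k with
    | zero => exact ⟨⟨a, by simpa using hx0⟩, ⟨b, by simpa using hx1⟩⟩
    | succ k ih =>
      obtain ⟨⟨m1, h1'⟩, ⟨m2, h2'⟩⟩ := ih
      refine ⟨⟨m2, by push_cast; exact h2'⟩, ⟨(t - 1) * m2 - m1 + (b - s), ?_⟩⟩
      have := hrec' ((k : ℤ) + 1)
      have e1 : (k : ℤ) + 1 - 1 = (k : ℤ) := by ring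
      rw [e1] at this
      push_cast
      rw [this, h1', h2']
      push_cast
      ring
  have bwd : ∀ k : ℕ, (∃ m : ℤ, x (-(k : ℤ)) = m) ∧ (∃ m : ℤ, x (-(k : ℤ) + 1) = m) := by
    intro k
    induction k with
    | zero => exact ⟨⟨a, by simpa using hx0⟩, ⟨b, by simpa using hx1⟩⟩
    | succ k ih =>
      obtain ⟨⟨m1, h1'⟩, ⟨m2, h2'⟩⟩ := ih
      refine ⟨⟨(t - 1) * m1 - m2 + (b - s), ?_⟩, ⟨m1, ?_⟩⟩
      · have e1 : (-((k + 1 : ℕ) : ℤ)) = -(k : ℤ) - 1 := by push_cast; ring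
        rw [e1]
        have : x (-(k : ℤ) - 1) = ((t - 1 : ℤ) : ℚ) * x (-(k : ℤ)) - x (-(k : ℤ) + 1)
            + ((b - s : ℤ) : ℚ) := by linarith [hrec' (-(k : ℤ))]
        rw [this, h1', h2']
        push_cast
        ring
      · have e1 : (-((k + 1 : ℕ) : ℤ)) + 1 = -(k : ℤ) := by push_cast; ring
        rw [e1]; exact h1'
  intro n
  rcases le_or_gt 0 n with h | h
  · lift n to ℕ using h
    exact (fwd n).1
  · obtain ⟨k, hk⟩ : ∃ k : ℕ, n = -(k : ℤ) := ⟨n.natAbs, by omega⟩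
    rw [hk]
    exact (bwd k).1
end

section
/- Let b : ℤ → ℤ and α, β ∈ ℤ satisfy b(n+1) = α·b(n) − b(n−1) + β for all n ∈ ℤ. Then the greatest common divisor of three consecutive terms is independent of the position: for all k, l ∈ ℤ, gcd(gcd(b(k), b(k+1)), b(k+2)) = gcd(gcd(b(l), b(l+1)), b(l+2)). -/
/-- For an integer lens sequence, the gcd of three consecutive terms does
not depend on the position. -/
theorem lens_sequence_gcd_invariant
    (b : ℤ → ℤ) (α β : ℤ)
    (hrec : ∀ n : ℤ, b (n + 1) = α * b n - b (n - 1) + β) :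
    ∀ k l : ℤ, Int.gcd (Int.gcd (b k) (b (k + 1)) : ℤ) (b (k + 2))
      = Int.gcd (Int.gcd (b l) (b (l + 1)) : ℤ) (b (l + 2)) := by
  set g : ℤ → ℕ := fun n => Int.gcd (Int.gcd (b n) (b (n + 1)) : ℤ) (b (n + 2)) with hg
  have step : ∀ n : ℤ, g (n + 1) = g n := by
    intro n
    have h1 : b (n + 2) = α * b (n + 1) - b n + β := by
      have := hrec (n + 1)
      rwa [show (n : ℤ) + 1 + 1 = n + 2 by ring, show (n : ℤ) + 1 - 1 = n by ring] at this
    have h2 : b (n + 3) = α * b (n + 2) - b (n + 1) + β := by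
      have := hrec (n + 2)
      rwa [show (n : ℤ) + 2 + 1 = n + 3 by ring, show (n : ℤ) + 2 - 1 = n + 1 by ring] at this
    have h3 : b (n + 3) = b n + (-1 - α) * b (n + 1) + (α + 1) * b (n + 2) := by
      linear_combination h2 - h1
    have h4 : b n = b (n + 3) + (1 + α) * b (n + 1) + (-α - 1) * b (n + 2) := by
      linear_combination -h3
    have idx : g (n + 1) = Int.gcd (Int.gcd (b (n + 1)) (b (n + 2)) : ℤ) (b (n + 3)) := by
      simp only [hg]
      rw [show (n : ℤ) + 1 + 1 = n + 2 by ring, show (n : ℤ) + 1 + 2 = n + 3 by ring]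
    -- divisibilities for g n
    have dn : (g n : ℤ) ∣ b n :=
      dvd_trans (Int.gcd_dvd_left _ _) (Int.gcd_dvd_left _ _)
    have dn1 : (g n : ℤ) ∣ b (n + 1) :=
      dvd_trans (Int.gcd_dvd_left _ _) (Int.gcd_dvd_right _ _)
    have dn2 : (g n : ℤ) ∣ b (n + 2) := Int.gcd_dvd_right _ _
    have dn3 : (g n : ℤ) ∣ b (n + 3) := by
      rw [h3]; exact dvd_add (dvd_add dn (dn1.mul_left _)) (dn2.mul_left _)
    -- divisibilities for g (n+1)
    have en1 : ((g (n + 1) : ℤ)) ∣ b (n + 1) := by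
      rw [idx]; exact dvd_trans (Int.gcd_dvd_left _ _) (Int.gcd_dvd_left _ _)
    have en2 : ((g (n + 1) : ℤ)) ∣ b (n + 2) := by
      rw [idx]; exact dvd_trans (Int.gcd_dvd_left _ _) (Int.gcd_dvd_right _ _)
    have en3 : ((g (n + 1) : ℤ)) ∣ b (n + 3) := by
      rw [idx]; exact Int.gcd_dvd_right _ _
    have en : ((g (n + 1) : ℤ)) ∣ b n := by
      rw [h4]; exact dvd_add (dvd_add en3 (en1.mul_left _)) (en2.mul_left _)
    apply Nat.dvd_antisymm
    · rw [← Int.natCast_dvd_natCast]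
      exact Int.dvd_coe_gcd (Int.dvd_coe_gcd en en1) en2
    · rw [← Int.natCast_dvd_natCast, idx]
      exact Int.dvd_coe_gcd (Int.dvd_coe_gcd dn1 dn2) dn3
  have main : ∀ n : ℤ, g n = g 0 := by
    intro n
    induction n using Int.induction_on with
    | zero => rfl
    | succ i ih => rw [step i, ih]
    | pred i ih =>
      have := step (-(i : ℤ) - 1)
      rw [show -(i : ℤ) - 1 + 1 = -i by ring] at this
      rw [← this, ih]
  intro k l
  exact (main k).trans (main l).symm
end

section
/- Let b : ℤ → ℚ with b(n) ≠ 0 for all n satisfy the lens recurrence b(n+1) = α·b(n) − b(n−1) + β for all n ∈ ℤ, together with the compatibility condition b(n₀)² + b(n₀+1)² = α·b(n₀)·b(n₀+1) + β·(b(n₀) + b(n₀+1)) at some index n₀. Let f : ℤ → ℚ with f(n) ≠ 0 for all n be any factorization of b, i.e. b(n) = f(n−1)·f(n) for all n ∈ ℤ. Then f satisfies the three-term recurrence f(n+2) + f(n−2) = α·f(n) for all n ∈ ℤ. -/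
/-- Any nowhere-vanishing factorization `f` of a lens sequence `b`
(i.e. `b n = f (n-1) * f n`) satisfies `f (n+2) + f (n-2) = α * f n`. -/
theorem underground_three_term_recurrence
    (b : ℤ → ℚ) (α β : ℚ) (hb : ∀ n : ℤ, b n ≠ 0)
    (hrec : ∀ n : ℤ, b (n + 1) = α * b n - b (n - 1) + β)
    (n₀ : ℤ)
    (hcomp : (b n₀) ^ 2 + (b (n₀ + 1)) ^ 2
      = α * b n₀ * b (n₀ + 1) + β * (b n₀ + b (n₀ + 1)))
    (f : ℤ → ℚ) (hf : ∀ n : ℤ, f n ≠ 0)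
    (hfac : ∀ n : ℤ, b n = f (n - 1) * f n) :
    ∀ n : ℤ, f (n + 2) + f (n - 2) = α * f n := by
  -- compatibility propagates to all indices
  have step : ∀ n : ℤ, b (n + 2) = α * b (n + 1) - b n + β := by
    intro n
    have h := hrec (n + 1)
    rw [show (n : ℤ) + 1 + 1 = n + 2 by ring, show (n : ℤ) + 1 - 1 = n by ring] at h
    exact h
  have key : ∀ n : ℤ, (b n) ^ 2 + (b (n + 1)) ^ 2
      = α * b n * b (n + 1) + β * (b n + b (n + 1)) := by
    have H : ∀ k : ℤ, (b (n₀ + k)) ^ 2 + (b (n₀ + k + 1)) ^ 2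
        = α * b (n₀ + k) * b (n₀ + k + 1) + β * (b (n₀ + k) + b (n₀ + k + 1)) := by
      intro k
      induction k using Int.induction_on with
      | zero => simpa using hcomp
      | succ k ih =>
        have h := step (n₀ + k)
        rw [show (n₀ : ℤ) + (k + 1) = n₀ + k + 1 by ring,
            show (n₀ : ℤ) + k + 1 + 1 = n₀ + k + 2 by ring]
        linear_combination ih + (b (n₀ + k + 2) - b (n₀ + k)) * h
      | pred k ih =>
        have h := step (n₀ + (-k - 1))
        rw [show (n₀ : ℤ) + (-k - 1) + 2 = n₀ + -k + 1 by ring,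
            show (n₀ : ℤ) + (-k - 1) + 1 = n₀ + -k by ring] at h
        rw [show (n₀ : ℤ) + (-(k : ℤ) - 1) + 1 = n₀ + -k by ring]
        linear_combination ih + (b (n₀ + (-(k:ℤ) - 1)) - b (n₀ + -(k:ℤ) + 1)) * h
    intro n
    have := H (n - n₀)
    rwa [show n₀ + (n - n₀) = n by ring] at this
  intro n
  -- recurrence at n and n+1, factorized
  have h1 := hrec n
  have h2 := step n
  have hk := key n
  have e0 := hfac (n - 1)
  have e1 := hfac n
  have e2 := hfac (n + 1)
  have e3 := hfac (n + 2)
  rw [show (n : ℤ) - 1 - 1 = n - 2 by ring] at e0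
  rw [show (n : ℤ) + 1 - 1 = n by ring] at e2
  rw [show (n : ℤ) + 2 - 1 = n + 1 by ring] at e3
  simp only [e0, e1, e2, e3] at h1 h2 hk
  have hP : f (n - 1) * f n * f (n + 1) ≠ 0 :=
    mul_ne_zero (mul_ne_zero (hf _) (hf _)) (hf _)
  have main : f (n - 1) * f n * f (n + 1) * (f (n + 2) + f (n - 2))
      = f (n - 1) * f n * f (n + 1) * (α * f n) := by
    linear_combination (f (n - 1) * f n) * h2 + (f n * f (n + 1)) * h1 - hk
  exact mul_left_cancel₀ hP main
end

section
/- Let b : ℤ → ℤ with b(n) ≠ 0 for all n, and α, β ∈ ℤ, satisfy b(n+1) = α·b(n) − b(n−1) + β for all n ∈ ℤ together with the compatibility condition b(n₀)² + b(n₀+1)² = α·b(n₀)·b(n₀+1) + β·(b(n₀) + b(n₀+1)) at some index n₀. Then there exists an integer sequence f : ℤ → ℤ such that b(n) = f(n−1)·f(n) for all n ∈ ℤ. -/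
/-- Auxiliary stride-3 recursion used to build the underground sequence. -/
def lensAux (a₀ a₁ a₂ : ℤ) (c : ℕ → ℤ) : ℕ → ℤ
  | 0 => a₀
  | 1 => a₁
  | 2 => a₂
  | k+3 => c k / lensAux a₀ a₁ a₂ c k

/-- Factorization theorem, existence: any integer lens sequence with
nowhere-vanishing terms admits an integer factorization `b n = f (n-1) * f n`. -/
theorem lens_sequence_integer_factorization
    (b : ℤ → ℤ) (α β : ℤ) (hb : ∀ n : ℤ, b n ≠ 0)
    (hrec : ∀ n : ℤ, b (n + 1) = α * b n - b (n - 1) + β)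
    (n₀ : ℤ)
    (hcomp : (b n₀) ^ 2 + (b (n₀ + 1)) ^ 2
      = α * b n₀ * b (n₀ + 1) + β * (b n₀ + b (n₀ + 1))) :
    ∃ f : ℤ → ℤ, ∀ n : ℤ, b n = f (n - 1) * f n := by
  -- the recurrence relating three consecutive terms
  have hrec3 : ∀ n : ℤ, b (n + 2) = α * b (n + 1) - b n + β := by
    intro n
    have h := hrec (n + 1)
    have e1 : n + 1 + 1 = n + 2 := by ring
    have e2 : n + 1 - 1 = n := by ring
    rw [e1, e2] at h
    exact h
  -- compatibility holds at every index
  have hC : ∀ n : ℤ, (b n) ^ 2 + (b (n + 1)) ^ 2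
      = α * b n * b (n + 1) + β * (b n + b (n + 1)) := by
    -- prove by integer induction from n₀
    have key : ∀ i : ℤ, (b (n₀ + i)) ^ 2 + (b (n₀ + i + 1)) ^ 2
        = α * b (n₀ + i) * b (n₀ + i + 1) + β * (b (n₀ + i) + b (n₀ + i + 1)) := by
      intro i
      induction i using Int.induction_on with
      | zero => simpa using hcomp
      | succ k ih =>
          have hr := hrec3 (n₀ + k)
          have e1 : n₀ + ((k : ℤ) + 1) = n₀ + k + 1 := by ring
          have e2 : n₀ + (k : ℤ) + 1 + 1 = n₀ + k + 2 := by ring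
          rw [e1, e2]
          linear_combination ih + (b (n₀ + (k : ℤ) + 2) - b (n₀ + k)) * hr
      | pred k ih =>
          have e3 : n₀ + -(k : ℤ) = n₀ - k := by ring
          rw [e3] at ih
          have e1 : n₀ + (-(k : ℤ) - 1) = n₀ - k - 1 := by ring
          rw [e1]
          have e2 : n₀ - (k : ℤ) - 1 + 1 = n₀ - k := by ring
          rw [e2]
          have hr := hrec3 (n₀ - k - 1)
          have e5 : n₀ - (k : ℤ) - 1 + 1 = n₀ - k := by ring
          have e6 : n₀ - (k : ℤ) - 1 + 2 = n₀ - k + 1 := by ring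
          rw [e5, e6] at hr
          linear_combination ih + (b (n₀ - (k : ℤ) - 1) - b (n₀ - k + 1)) * hr
    intro n
    have h := key (n - n₀)
    have e : n₀ + (n - n₀) = n := by ring
    rw [e] at h
    exact h
  -- the key multiplicative identity
  have hL : ∀ n : ℤ, b (n - 1) * b (n + 1) = b n * (b n - β) := by
    intro n
    linear_combination b (n + 1) * hrec n - hC n
  -- seeds
  set g : ℤ := (Int.gcd (b n₀) (b (n₀ + 1)) : ℤ) with hg
  have hgx : g ∣ b n₀ := Int.gcd_dvd_left _ _
  have hgy : g ∣ b (n₀ + 1) := Int.gcd_dvd_right _ _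
  have hg0 : g ≠ 0 := by
    simp only [hg, ne_eq, Int.natCast_eq_zero, Int.gcd_eq_zero_iff, not_and]
    intro h; exact absurd h (hb n₀)
  set u0 : ℤ := b n₀ / g with hu0
  set u2 : ℤ := b (n₀ + 1) / g with hu2
  have h0g : u0 * g = b n₀ := Int.ediv_mul_cancel hgx
  have h2g : g * u2 = b (n₀ + 1) := Int.mul_ediv_cancel' hgy
  -- seed divisibilities via Bezout
  have hS1 : b n₀ ∣ g * b (n₀ - 1) := by
    refine ⟨Int.gcdA (b n₀) (b (n₀ + 1)) * b (n₀ - 1)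
      + Int.gcdB (b n₀) (b (n₀ + 1)) * (b n₀ - β), ?_⟩
    have hbz := Int.gcd_eq_gcd_ab (b n₀) (b (n₀ + 1))
    have hL0 := hL n₀
    linear_combination b (n₀ - 1) * hbz + Int.gcdB (b n₀) (b (n₀ + 1)) * hL0
  have hS2 : b (n₀ + 1) ∣ g * b (n₀ + 2) := by
    refine ⟨Int.gcdB (b n₀) (b (n₀ + 1)) * b (n₀ + 2)
      + Int.gcdA (b n₀) (b (n₀ + 1)) * (b (n₀ + 1) - β), ?_⟩
    have hbz := Int.gcd_eq_gcd_ab (b n₀) (b (n₀ + 1))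
    have hL1 := hL (n₀ + 1)
    have e1 : n₀ + 1 - 1 = n₀ := by ring
    have e2 : n₀ + 1 + 1 = n₀ + 2 := by ring
    rw [e1, e2] at hL1
    linear_combination b (n₀ + 2) * hbz + Int.gcdA (b n₀) (b (n₀ + 1)) * hL1
  have hdvd1 : u0 ∣ b (n₀ - 1) := by
    obtain ⟨c, hc⟩ := hS1
    refine ⟨c, mul_left_cancel₀ hg0 ?_⟩
    linear_combination hc + c * h0g.symm
  have hdvd2 : u2 ∣ b (n₀ + 2) := by
    obtain ⟨c, hc⟩ := hS2
    refine ⟨c, mul_left_cancel₀ hg0 ?_⟩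
    linear_combination hc + c * h2g.symm
  -- the forward and backward underground half-sequences
  set u : ℕ → ℤ := lensAux u0 g u2 (fun k => b (n₀ + k + 1) - β) with hu
  set d : ℕ → ℤ := lensAux u2 g u0 (fun k => b (n₀ - k) - β) with hd
  have hu_eq : ∀ k : ℕ, u (k + 3) = (b (n₀ + k + 1) - β) / u k := fun k => rfl
  have hd_eq : ∀ k : ℕ, d (k + 3) = (b (n₀ - k) - β) / d k := fun k => rfl
  -- forward invariant
  have hP : ∀ k : ℕ, u k * u (k + 1) = b (n₀ + k) ∧ u k ∣ b (n₀ + k - 1) := by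
    intro k
    induction k using Nat.strong_induction_on with
    | _ k ih =>
      match k with
      | 0 =>
        constructor
        · show u0 * g = b (n₀ + ((0 : ℕ) : ℤ))
          simpa using h0g
        · show u0 ∣ b (n₀ + ((0 : ℕ) : ℤ) - 1)
          simpa using hdvd1
      | 1 =>
        constructor
        · show g * u2 = b (n₀ + ((1 : ℕ) : ℤ))
          simpa using h2g
        · show g ∣ b (n₀ + ((1 : ℕ) : ℤ) - 1)
          have e : n₀ + ((1 : ℕ) : ℤ) - 1 = n₀ := by push_cast; ring
          rw [e]; exact hgx
      | (k + 2) =>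
        obtain ⟨hPk, hDk⟩ := ih k (by omega)
        obtain ⟨hPk1, _⟩ := ih (k + 1) (by omega)
        have ek1 : n₀ + ((k + 1 : ℕ) : ℤ) = n₀ + k + 1 := by push_cast; ring
        have ek2 : n₀ + ((k + 2 : ℕ) : ℤ) = n₀ + k + 2 := by push_cast; ring
        rw [ek1] at hPk1
        rw [ek2]
        have ek2' : n₀ + (k : ℤ) + 2 - 1 = n₀ + k + 1 := by ring
        rw [ek2']
        have hk1 : u (k + 1) * u (k + 2) = b (n₀ + k + 1) := hPk1
        show u (k + 2) * u (k + 3) = b (n₀ + (k : ℤ) + 2) ∧ u (k + 2) ∣ b (n₀ + (k : ℤ) + 1)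
        have hdvd3 : u k ∣ b (n₀ + (k : ℤ) + 1) - β := by
          have hr := hrec (n₀ + k)
          have h1 : u k ∣ b (n₀ + (k : ℤ)) := ⟨u (k + 1), hPk.symm⟩
          have e : b (n₀ + (k : ℤ) + 1) - β = α * b (n₀ + k) - b (n₀ + k - 1) := by
            linear_combination hr
          rw [e]
          exact dvd_sub (h1.mul_left α) hDk
        have hu3 : u (k + 3) * u k = b (n₀ + (k : ℤ) + 1) - β := by
          rw [hu_eq k]
          exact Int.ediv_mul_cancel hdvd3
        have hLn := hL (n₀ + (k : ℤ) + 1)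
        have f1 : n₀ + (k : ℤ) + 1 - 1 = n₀ + k := by ring
        have f2 : n₀ + (k : ℤ) + 1 + 1 = n₀ + k + 2 := by ring
        rw [f1, f2] at hLn
        constructor
        · apply mul_left_cancel₀ (hb (n₀ + (k : ℤ)))
          linear_combination (- u (k + 2) * u (k + 3)) * hPk
            + (u (k + 3) * u k) * hk1 + b (n₀ + (k : ℤ) + 1) * hu3 - hLn
        · exact ⟨u (k + 1), by rw [mul_comm]; exact hk1.symm⟩
  -- backward invariant
  have hQ : ∀ k : ℕ, d k * d (k + 1) = b (n₀ + 1 - k) ∧ d k ∣ b (n₀ + 2 - k) := by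
    intro k
    induction k using Nat.strong_induction_on with
    | _ k ih =>
      match k with
      | 0 =>
        constructor
        · show u2 * g = b (n₀ + 1 - ((0 : ℕ) : ℤ))
          have e : n₀ + 1 - ((0 : ℕ) : ℤ) = n₀ + 1 := by push_cast; ring
          rw [e, mul_comm]; exact h2g
        · show u2 ∣ b (n₀ + 2 - ((0 : ℕ) : ℤ))
          have e : n₀ + 2 - ((0 : ℕ) : ℤ) = n₀ + 2 := by push_cast; ring
          rw [e]; exact hdvd2
      | 1 =>
        constructor
        · show g * u0 = b (n₀ + 1 - ((1 : ℕ) : ℤ))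
          have e : n₀ + 1 - ((1 : ℕ) : ℤ) = n₀ := by push_cast; ring
          rw [e, mul_comm]; exact h0g
        · show g ∣ b (n₀ + 2 - ((1 : ℕ) : ℤ))
          have e : n₀ + 2 - ((1 : ℕ) : ℤ) = n₀ + 1 := by push_cast; ring
          rw [e]; exact hgy
      | (k + 2) =>
        obtain ⟨hQk, hEk⟩ := ih k (by omega)
        obtain ⟨hQk1, _⟩ := ih (k + 1) (by omega)
        have ek1 : n₀ + 1 - ((k + 1 : ℕ) : ℤ) = n₀ - k := by push_cast; ring
        have ek2 : n₀ + 1 - ((k + 2 : ℕ) : ℤ) = n₀ - k - 1 := by push_cast; ring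
        have ek3 : n₀ + 2 - ((k + 2 : ℕ) : ℤ) = n₀ - k := by push_cast; ring
        rw [ek1] at hQk1
        rw [ek2, ek3]
        show d (k + 2) * d (k + 3) = b (n₀ - (k : ℤ) - 1) ∧ d (k + 2) ∣ b (n₀ - (k : ℤ))
        have hdvd3 : d k ∣ b (n₀ - (k : ℤ)) - β := by
          have hr := hrec (n₀ + 1 - k)
          have e1 : n₀ + 1 - (k : ℤ) + 1 = n₀ + 2 - k := by ring
          have e2 : n₀ + 1 - (k : ℤ) - 1 = n₀ - k := by ring
          rw [e1, e2] at hr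
          have h1 : d k ∣ b (n₀ + 1 - (k : ℤ)) := ⟨d (k + 1), hQk.symm⟩
          have e : b (n₀ - (k : ℤ)) - β = α * b (n₀ + 1 - k) - b (n₀ + 2 - k) := by
            linear_combination hr
          rw [e]
          exact dvd_sub (h1.mul_left α) hEk
        have hd3 : d (k + 3) * d k = b (n₀ - (k : ℤ)) - β := by
          rw [hd_eq k]
          exact Int.ediv_mul_cancel hdvd3
        have hLn := hL (n₀ - (k : ℤ))
        have f1 : n₀ - (k : ℤ) - 1 = n₀ - k - 1 := by ring
        have f2 : n₀ - (k : ℤ) + 1 = n₀ + 1 - k := by ring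
        rw [f1, f2] at hLn
        constructor
        · apply mul_left_cancel₀ (hb (n₀ + 1 - (k : ℤ)))
          linear_combination (- d (k + 2) * d (k + 3)) * hQk
            + (d (k + 3) * d k) * hQk1 + b (n₀ - (k : ℤ)) * hd3 - hLn
        · exact ⟨d (k + 1), by rw [mul_comm]; exact hQk1.symm⟩
  -- assemble the underground sequence
  refine ⟨fun n => if n₀ ≤ n then u (n + 1 - n₀).toNat else d (n₀ + 1 - n).toNat, ?_⟩
  intro n
  by_cases h1 : n₀ + 1 ≤ n
  · have hn : n₀ ≤ n := by omega
    have hn1 : n₀ ≤ n - 1 := by omega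
    simp only [if_pos hn, if_pos hn1]
    set k : ℕ := (n - n₀).toNat with hk
    have hk1 : (n - 1 + 1 - n₀).toNat = k := by omega
    have hk2 : (n + 1 - n₀).toNat = k + 1 := by omega
    rw [hk1, hk2]
    have h := (hP k).1
    have ek : n₀ + (k : ℤ) = n := by omega
    rw [ek] at h
    exact h.symm
  · by_cases h2 : n = n₀
    · subst h2
      have hn : n ≤ n := le_refl _
      have hn1 : ¬ n ≤ n - 1 := by omega
      simp only [if_pos hn, if_neg hn1]
      have e1 : (n + 1 - (n - 1)).toNat = 2 := by omega
      have e2 : (n + 1 - n).toNat = 1 := by omega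
      rw [e1, e2]
      show b n = u0 * g
      exact h0g.symm
    · have hn : ¬ n₀ ≤ n := by omega
      have hn1 : ¬ n₀ ≤ n - 1 := by omega
      simp only [if_neg hn, if_neg hn1]
      set k : ℕ := (n₀ + 1 - n).toNat with hk
      have hk1 : (n₀ + 1 - (n - 1)).toNat = k + 1 := by omega
      rw [hk1]
      have h := (hQ k).1
      have ek : n₀ + 1 - (k : ℤ) = n := by omega
      rw [ek] at h
      rw [mul_comm]
      exact h.symm
end

section
/- Let b : ℤ → ℤ with b(n) ≠ 0 for all n, and α, β ∈ ℤ, satisfy b(n+1) = α·b(n) − b(n−1) + β for all n ∈ ℤ together with the compatibility condition at some index, and assume b is primitive, i.e. gcd(b(n), b(n+1), b(n+2)) = 1 for every n. Then: (1) any integer factorization f : ℤ → ℤ of b (meaning b(n) = f(n−1)·f(n) for all n) satisfies |f(n)| = gcd(b(n), b(n+1)) for all n ∈ ℤ; and (2) if f, g : ℤ → ℤ are two integer factorizations of b, then either g(n) = f(n) for all n or g(n) = −f(n) for all n. -/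
private lemma lens_prop_eq (f g : ℤ → ℤ) (hf0 : ∀ n : ℤ, f n ≠ 0)
    (h : ∀ n : ℤ, f (n - 1) * f n = g (n - 1) * g n) (h0 : g 0 = f 0) :
    ∀ n : ℤ, g n = f n := by
  intro n
  induction n using Int.induction_on with
  | zero => exact h0
  | succ k ih =>
    have h' := h ((k : ℤ) + 1)
    simp only [add_sub_cancel_right] at h'
    rw [ih] at h'
    exact (mul_left_cancel₀ (hf0 k) h').symm
  | pred k ih =>
    have h' := h (-(k : ℤ))
    rw [ih] at h'
    have := mul_right_cancel₀ (hf0 (-(k:ℤ))) h'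
    exact this.symm

/-- Factorization theorem, uniqueness for primitive sequences:
for a primitive integer lens sequence, any integer factorization `f` satisfies
`|f n| = gcd (b n) (b (n+1))`, and the factorization is unique up to a global sign. -/
theorem lens_sequence_factorization_unique
    (b : ℤ → ℤ) (α β : ℤ) (hb : ∀ n : ℤ, b n ≠ 0)
    (hrec : ∀ n : ℤ, b (n + 1) = α * b n - b (n - 1) + β)
    (n₀ : ℤ)
    (hcomp : (b n₀) ^ 2 + (b (n₀ + 1)) ^ 2
      = α * b n₀ * b (n₀ + 1) + β * (b n₀ + b (n₀ + 1)))
    (hprim : ∀ n : ℤ, Int.gcd (Int.gcd (b n) (b (n + 1)) : ℤ) (b (n + 2)) = 1) :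
    (∀ f : ℤ → ℤ, (∀ n : ℤ, b n = f (n - 1) * f n) →
      ∀ n : ℤ, |f n| = (Int.gcd (b n) (b (n + 1)) : ℤ)) ∧
    (∀ f g : ℤ → ℤ, (∀ n : ℤ, b n = f (n - 1) * f n) →
      (∀ n : ℤ, b n = g (n - 1) * g n) →
      (∀ n : ℤ, g n = f n) ∨ (∀ n : ℤ, g n = -f n)) := by
  -- key facts about any factorization
  have hstep : ∀ (f : ℤ → ℤ), (∀ n : ℤ, b n = f (n - 1) * f n) →
      ∀ n : ℤ, b (n + 1) = f n * f (n + 1) := by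
    intro f hf n
    have := hf (n + 1)
    simpa using this
  have hf0 : ∀ (f : ℤ → ℤ), (∀ n : ℤ, b n = f (n - 1) * f n) → ∀ n : ℤ, f n ≠ 0 := by
    intro f hf n hn
    exact hb (n + 1) (by rw [hstep f hf n, hn, zero_mul])
  have habs : ∀ (f : ℤ → ℤ), (∀ n : ℤ, b n = f (n - 1) * f n) →
      ∀ n : ℤ, |f n| = (Int.gcd (b n) (b (n + 1)) : ℤ) := by
    intro f hf n
    have h1 : b n = f (n - 1) * f n := hf n
    have h2 : b (n + 1) = f n * f (n + 1) := hstep f hf n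
    have h3 : b (n + 2) = f (n + 1) * f (n + 2) := by
      have := hstep f hf (n + 1); rwa [show n + 1 + 1 = n + 2 by ring] at this
    -- gcd of adjacent f's is 1
    have hcop : Int.gcd (f (n - 1)) (f (n + 1)) = 1 := by
      set k : ℤ := (Int.gcd (f (n - 1)) (f (n + 1)) : ℤ) with hk
      have d1 : k ∣ b n := h1 ▸ (Int.gcd_dvd_left _ _).mul_right _
      have d2 : k ∣ b (n + 1) := h2 ▸ (Int.gcd_dvd_right _ _).mul_left _
      have d3 : k ∣ b (n + 2) := h3 ▸ (Int.gcd_dvd_right _ _).mul_right _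
      have : k ∣ (Int.gcd (Int.gcd (b n) (b (n + 1)) : ℤ) (b (n + 2)) : ℤ) :=
        Int.dvd_coe_gcd (Int.dvd_coe_gcd d1 d2) d3
      rw [hprim n] at this
      have := Int.isUnit_iff.mp (isUnit_of_dvd_one this)
      have hknn : (0:ℤ) ≤ k := Int.natCast_nonneg _
      omega
    have : Int.gcd (b n) (b (n + 1)) = Int.gcd (f (n - 1)) (f (n + 1)) * (f n).natAbs := by
      rw [h1, h2, mul_comm (f n) (f (n + 1)), Int.gcd_mul_right]
    rw [this, hcop, one_mul, Int.abs_eq_natAbs]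
  refine ⟨habs, ?_⟩
  intro f g hf hg
  have hgfabs : |g 0| = |f 0| := by rw [habs f hf 0, habs g hg 0]
  have hprod : ∀ n : ℤ, f (n - 1) * f n = g (n - 1) * g n := fun n => by
    rw [← hf n, ← hg n]
  rcases abs_eq_abs.mp hgfabs with h0 | h0
  · exact Or.inl (lens_prop_eq f g (hf0 f hf) hprod h0)
  · right
    have hnf : ∀ n : ℤ, b n = (-f) (n - 1) * (-f) n := fun n => by
      simp only [Pi.neg_apply, neg_mul_neg]; exact hf n
    have hnf0 : ∀ n : ℤ, (-f) n ≠ 0 := fun n => neg_ne_zero.mpr (hf0 f hf n)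
    have hprod' : ∀ n : ℤ, (-f) (n - 1) * (-f) n = g (n - 1) * g n := fun n => by
      rw [← hnf n, ← hg n]
    have := lens_prop_eq (-f) g hnf0 hprod' (by simpa using h0)
    intro n; simpa using this n
end

section
/- Let b : ℤ → ℚ with b(n) ≠ 0 for all n satisfy the lens recurrence b(n+1) = α·b(n) − b(n−1) + β for all n ∈ ℤ, together with the compatibility condition at some index, and let f : ℤ → ℚ with f(n) ≠ 0 for all n satisfy b(n) = f(n−1)·f(n) for all n. Then f satisfies the quadratic four-term recurrence: for all n ∈ ℤ, f(n+3)·f(n) − f(n+1)·f(n+2) = −β. -/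
/-- Any nowhere-vanishing factorization `f` of a lens sequence satisfies
the quadratic four-term recurrence `f (n+3) * f n - f (n+1) * f (n+2) = -β`. -/
theorem underground_quadratic_recurrence
    (b : ℤ → ℚ) (α β : ℚ) (hb : ∀ n : ℤ, b n ≠ 0)
    (hrec : ∀ n : ℤ, b (n + 1) = α * b n - b (n - 1) + β)
    (n₀ : ℤ)
    (hcomp : (b n₀) ^ 2 + (b (n₀ + 1)) ^ 2
      = α * b n₀ * b (n₀ + 1) + β * (b n₀ + b (n₀ + 1)))
    (f : ℤ → ℚ) (hf : ∀ n : ℤ, f n ≠ 0)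
    (hfac : ∀ n : ℤ, b n = f (n - 1) * f n) :
    ∀ n : ℤ, f (n + 3) * f n - f (n + 1) * f (n + 2) = -β := by
  -- compatibility holds at every index
  have hcompAll : ∀ m : ℤ, (b m) ^ 2 + (b (m + 1)) ^ 2
      = α * b m * b (m + 1) + β * (b m + b (m + 1)) := by
    intro m
    refine Int.inductionOn' m n₀ hcomp ?_ ?_
    · intro k _ hk
      have e := hrec (k + 1)
      rw [show k + 1 - 1 = k by ring] at e
      linear_combination hk + (b (k + 1 + 1) - b k) * e
    · intro k _ hk
      have e := hrec k
      rw [show k - 1 + 1 = k by ring]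
      linear_combination hk + (b (k - 1) - b (k + 1)) * e
  intro n
  have e := hrec (n + 2)
  rw [show n + 2 - 1 = n + 1 by ring, show n + 2 + 1 = n + 3 by ring] at e
  have key : b (n + 1) * b (n + 3) = b (n + 2) ^ 2 - β * b (n + 2) := by
    have c := hcompAll (n + 1)
    rw [show n + 1 + 1 = n + 2 by ring] at c
    linear_combination b (n + 1) * e - c
  have h1 := hfac (n + 1); rw [show n + 1 - 1 = n by ring] at h1
  have h2 := hfac (n + 2); rw [show n + 2 - 1 = n + 1 by ring] at h2
  have h3 := hfac (n + 3); rw [show n + 3 - 1 = n + 2 by ring] at h3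
  apply mul_right_cancel₀ (mul_ne_zero (hf (n + 1)) (hf (n + 2)))
  rw [h1, h2, h3] at key
  linear_combination key
end

section
/- Let k, s ∈ ℤ and let f : ℤ → ℤ be an alternating sequence for (k, s): for every n ∈ ℤ, f(n) = k·f(n−1) − f(n−2) if n is even, and f(n) = s·f(n−1) − f(n−2) if n is odd. Define b(n) = f(n−1)·f(n). Then, with α = k·s − 2 and β = k·f(1)² + s·f(0)² − k·s·f(0)·f(1), the sequence b satisfies, for all n ∈ ℤ, both the lens recurrence b(n+1) = α·b(n) − b(n−1) + β and the compatibility condition b(n)² + b(n+1)² = α·b(n)·b(n+1) + β·(b(n) + b(n+1)). -/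
/-- Underground Sequence Structure, part (i): if `f` is an alternating
sequence for `(k, s)` and `b n = f (n-1) * f n`, then `b` satisfies the lens recurrence
with `α = k·s - 2`, `β = k·f(1)² + s·f(0)² - k·s·f(0)·f(1)`, together with the
compatibility condition at every index. -/
theorem alternating_sequence_gives_lens_sequence
    (k s : ℤ) (f : ℤ → ℤ)
    (hfe : ∀ n : ℤ, Even n → f n = k * f (n - 1) - f (n - 2))
    (hfo : ∀ n : ℤ, Odd n → f n = s * f (n - 1) - f (n - 2))
    (b : ℤ → ℤ) (hbf : ∀ n : ℤ, b n = f (n - 1) * f n)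
    (α β : ℤ) (hα : α = k * s - 2)
    (hβ : β = k * (f 1) ^ 2 + s * (f 0) ^ 2 - k * s * (f 0) * (f 1)) :
    ∀ n : ℤ, b (n + 1) = α * b n - b (n - 1) + β ∧
      (b n) ^ 2 + (b (n + 1)) ^ 2 = α * b n * b (n + 1) + β * (b n + b (n + 1)) := by
  -- invariant
  set P : ℤ → Prop := fun n =>
    (Odd n → k * (f n) ^ 2 + s * (f (n - 1)) ^ 2 - k * s * f (n - 1) * f n = β) ∧
    (Even n → s * (f n) ^ 2 + k * (f (n - 1)) ^ 2 - k * s * f (n - 1) * f n = β) with hP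
  have up : ∀ n : ℤ, P n → P (n + 1) := by
    intro n hn
    constructor
    · intro hodd
      have hne : Even n := by
        obtain ⟨m, hm⟩ := hodd; exact ⟨m, by omega⟩
      have h1 : f (n + 1) = s * f n - f (n - 1) := by
        have := hfo (n + 1) hodd
        simpa [show n + 1 - 1 = n by ring, show n + 1 - 2 = n - 1 by ring] using this
      have hq := hn.2 hne
      simp only [show n + 1 - 1 = n by ring]
      rw [h1]
      linear_combination hq
    · intro heven
      have hno : Odd n := by
        obtain ⟨m, hm⟩ := heven; exact ⟨m - 1, by omega⟩
      have h1 : f (n + 1) = k * f n - f (n - 1) := by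
        have := hfe (n + 1) heven
        simpa [show n + 1 - 1 = n by ring, show n + 1 - 2 = n - 1 by ring] using this
      have hq := hn.1 hno
      simp only [show n + 1 - 1 = n by ring]
      rw [h1]
      linear_combination hq
  have down : ∀ n : ℤ, P n → P (n - 1) := by
    intro n hn
    constructor
    · intro hodd
      have hne : Even n := by
        obtain ⟨m, hm⟩ := hodd; exact ⟨m + 1, by omega⟩
      have h2 : f (n - 2) = k * f (n - 1) - f n := by
        have := hfe n hne; linarith
      have hq := hn.2 hne
      simp only [show n - 1 - 1 = n - 2 by ring]
      rw [h2]
      linear_combination hq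
    · intro heven
      have hno : Odd n := by
        obtain ⟨m, hm⟩ := heven; exact ⟨m, by omega⟩
      have h2 : f (n - 2) = s * f (n - 1) - f n := by
        have := hfo n hno; linarith
      have hq := hn.1 hno
      simp only [show n - 1 - 1 = n - 2 by ring]
      rw [h2]
      linear_combination hq
  have key : ∀ n : ℤ, P n := by
    intro n
    induction n using Int.induction_on with
    | zero =>
      constructor
      · intro h; exact absurd h (by decide)
      · intro _
        have h1 : f 1 = s * f 0 - f (-1) := by
          have := hfo 1 (by decide)
          norm_num at this
          exact this
        rw [hβ, h1]; ring
    | succ i ih => exact up i ih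
    | pred i ih => simpa [show (-(i : ℤ) - 1) = -i + -1 by ring, sub_eq_add_neg] using down (-i) ih
  -- main statement
  intro n
  have hq := key n
  rcases Int.even_or_odd n with hne | hno
  · -- n even : f (n+1) = s f n - f (n-1), f (n-2) = k f (n-1) - f n
    have h1 : f (n + 1) = s * f n - f (n - 1) := by
      have := hfo (n + 1) (by obtain ⟨m, hm⟩ := hne; exact ⟨m, by omega⟩)
      simpa [show n + 1 - 1 = n by ring, show n + 1 - 2 = n - 1 by ring] using this
    have h2 : f (n - 2) = k * f (n - 1) - f n := by
      have := hfe n hne; linarith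
    have hQ := hq.2 hne
    rw [hbf (n + 1), hbf n, hbf (n - 1), hα]
    simp only [show n + 1 - 1 = n by ring, show n - 1 - 1 = n - 2 by ring]
    rw [h1, h2]
    constructor
    · linear_combination hQ
    · linear_combination (f (n - 1) * f n + f n * (s * f n - f (n - 1))) * hQ
  · have h1 : f (n + 1) = k * f n - f (n - 1) := by
      have := hfe (n + 1) (by obtain ⟨m, hm⟩ := hno; exact ⟨m + 1, by omega⟩)
      simpa [show n + 1 - 1 = n by ring, show n + 1 - 2 = n - 1 by ring] using this
    have h2 : f (n - 2) = s * f (n - 1) - f n := by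
      have := hfo n hno; linarith
    have hQ := hq.1 hno
    rw [hbf (n + 1), hbf n, hbf (n - 1), hα]
    simp only [show n + 1 - 1 = n by ring, show n - 1 - 1 = n - 2 by ring]
    rw [h1, h2]
    constructor
    · linear_combination hQ
    · linear_combination (f (n - 1) * f n + f n * (k * f n - f (n - 1))) * hQ
end

section
/- Let a, b, c be positive integers. The bilateral sequence x : ℤ → ℚ determined by x(0) = a, x(1) = b, x(2) = c and the lens recurrence x(n+1) = α·x(n) − x(n−1) + β with α = (a·b + b·c + c·a)/b² − 1 and β = (b² − a·c)/b takes a value in ℤ at every index n ∈ ℤ if and only if the following three conditions hold, where d = gcd(a, b, c): (i) gcd(a,b)·gcd(b,c) = b·d; (ii) gcd(a,b)² divides (a + b)·d; (iii) gcd(b,c)² divides (b + c)·d. -/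
private def lensF (α β A B : ℚ) : ℕ → ℚ
  | 0 => A
  | 1 => B
  | (n+2) => α * lensF α β A B (n+1) - lensF α β A B n + β

private def lensX (α β A B : ℚ) (n : ℤ) : ℚ :=
  if 0 ≤ n then lensF α β A B n.toNat else lensF α β A (α*A - B + β) (-n).toNat

private lemma lensX_nat (α β A B : ℚ) (k : ℕ) : lensX α β A B (k : ℤ) = lensF α β A B k := by
  simp [lensX]

private lemma lensX_neg (α β A B : ℚ) (k : ℕ) :
    lensX α β A B (-(k:ℤ)) = lensF α β A (α*A - B + β) k := by
  rcases Nat.eq_zero_or_pos k with rfl | hk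
  · simp [lensX, lensF]
  · have h : ¬ (0 ≤ -(k:ℤ)) := by omega
    simp [lensX, h, hk.ne']

private lemma lensX_rec (α β A B : ℚ) (n : ℤ) :
    lensX α β A B (n+1) = α * lensX α β A B n - lensX α β A B (n-1) + β := by
  have hg1 : lensF α β A (α*A - B + β) 1 = α*A - B + β := rfl
  have hg0 : lensF α β A (α*A - B + β) 0 = A := rfl
  obtain ⟨m, rfl | rfl⟩ := Int.eq_nat_or_neg n
  · match m with
    | 0 =>
      have e1 : ((0:ℕ):ℤ) + 1 = ((1:ℕ):ℤ) := by norm_num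
      have e2 : ((0:ℕ):ℤ) - 1 = -((1:ℕ):ℤ) := by norm_num
      rw [e1, e2, lensX_nat, lensX_nat, lensX_neg, hg1]
      show B = α * A - (α*A - B + β) + β
      ring
    | (m+1) =>
      have e1 : ((m+1:ℕ):ℤ) + 1 = ((m+2:ℕ):ℤ) := by push_cast; ring
      have e2 : ((m+1:ℕ):ℤ) - 1 = ((m:ℕ):ℤ) := by push_cast; ring
      rw [e1, e2, lensX_nat, lensX_nat, lensX_nat]
      show lensF α β A B (m+2) = _
      rw [lensF]
  · match m with
    | 0 =>
      have e0 : -((0:ℕ):ℤ) = ((0:ℕ):ℤ) := by norm_num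
      have e1 : ((0:ℕ):ℤ) + 1 = ((1:ℕ):ℤ) := by norm_num
      have e2 : ((0:ℕ):ℤ) - 1 = -((1:ℕ):ℤ) := by norm_num
      rw [e0, e1, e2, lensX_nat, lensX_nat, lensX_neg, hg1]
      show B = α * A - (α*A - B + β) + β
      ring
    | 1 =>
      have e1 : -((1:ℕ):ℤ) + 1 = ((0:ℕ):ℤ) := by norm_num
      have e2 : -((1:ℕ):ℤ) - 1 = -((2:ℕ):ℤ) := by norm_num
      rw [e1, e2, lensX_nat, lensX_neg, lensX_neg, hg1]
      show A = α * (α*A - B + β) - lensF α β A (α*A - B + β) 2 + β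
      show A = α * (α*A - B + β) - (α * (α*A - B + β) - A + β) + β
      ring
    | (m+2) =>
      have e1 : -((m+2:ℕ):ℤ) + 1 = -((m+1:ℕ):ℤ) := by push_cast; ring
      have e2 : -((m+2:ℕ):ℤ) - 1 = -((m+3:ℕ):ℤ) := by push_cast; ring
      rw [e1, e2, lensX_neg, lensX_neg, lensX_neg]
      have h3 : lensF α β A (α*A - B + β) (m+3)
          = α * lensF α β A (α*A - B + β) (m+2) - lensF α β A (α*A - B + β) (m+1) + β := by
        rw [show m+3 = (m+1)+2 by ring, lensF]
      rw [h3]; ring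


private lemma lens_int_valued (x : ℤ → ℚ) (A B a b : ℤ)
    (h0 : x 0 = (a:ℚ)) (h1 : x 1 = (b:ℚ))
    (hrec : ∀ n : ℤ, x (n+1) = (A:ℚ) * x n - x (n-1) + (B:ℚ)) :
    ∀ n : ℤ, ∃ m : ℤ, x n = (m:ℚ) := by
  have main : ∀ n : ℤ, (∃ m : ℤ, x n = (m:ℚ)) ∧ (∃ m : ℤ, x (n+1) = (m:ℚ)) := by
    intro n
    induction n using Int.induction_on with
    | zero => exact ⟨⟨a, h0⟩, ⟨b, by simpa using h1⟩⟩
    | succ i hi =>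
      obtain ⟨⟨m1, hm1⟩, ⟨m2, hm2⟩⟩ := hi
      refine ⟨⟨m2, hm2⟩, ⟨A*m2 - m1 + B, ?_⟩⟩
      have h := hrec (i+1)
      rw [show (i:ℤ)+1-1 = i by ring] at h
      rw [h, hm1, hm2]; push_cast; ring
    | pred i hi =>
      obtain ⟨⟨m1, hm1⟩, ⟨m2, hm2⟩⟩ := hi
      have h := hrec (-i)
      rw [hm1, hm2] at h
      have hx : x (-i - 1) = (A:ℚ)*m1 - m2 + B := by linarith
      constructor
      · refine ⟨A*m1 - m2 + B, ?_⟩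
        rw [show -(i:ℤ)-1 = -i-1 by ring, hx]; push_cast; ring
      · refine ⟨m1, ?_⟩
        rw [show -(i:ℤ)-1+1 = -i by ring]; exact hm1
  exact fun n => (main n).1


private lemma lens_alpha_int (x : ℤ → ℚ) (α β : ℚ)
    (hrec : ∀ n : ℤ, x (n+1) = α * x n - x (n-1) + β)
    (hint : ∀ n : ℤ, ∃ m : ℤ, x n = (m:ℚ)) :
    (∃ A : ℤ, α = (A:ℚ)) ∨ (∀ n m : ℤ, x n = x m) := by
  choose X hX using hint
  have hrel : ∀ n m : ℤ, (α.num : ℚ) * ((X n - X m : ℤ) : ℚ)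
      = (α.den : ℚ) * (((X (n+1) - X (m+1)) + (X (n-1) - X (m-1)) : ℤ) : ℚ) := by
    intro n m
    have h1 := hrec n
    have h2 := hrec m
    simp only [hX] at h1 h2
    have hden : (α.den : ℚ) ≠ 0 := by exact_mod_cast α.den_ne_zero
    have hα : α = (α.num : ℚ) / (α.den : ℚ) := by exact_mod_cast (Rat.num_div_den α).symm
    rw [hα] at h1 h2
    push_cast
    field_simp at h1 h2 ⊢
    linarith
  have hrelZ : ∀ n m : ℤ, α.num * (X n - X m)
      = (α.den : ℤ) * ((X (n+1) - X (m+1)) + (X (n-1) - X (m-1))) := by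
    intro n m
    have := hrel n m
    exact_mod_cast this
  have claim : ∀ k : ℕ, ∀ n m : ℤ, (α.den : ℤ)^k ∣ X n - X m := by
    intro k
    induction k with
    | zero => intro n m; simp
    | succ k ih =>
      intro n m
      have hS : (α.den : ℤ)^k ∣ (X (n+1) - X (m+1)) + (X (n-1) - X (m-1)) :=
        (ih (n+1) (m+1)).add (ih (n-1) (m-1))
      have hdvd : (α.den : ℤ)^(k+1) ∣ α.num * (X n - X m) := by
        rw [hrelZ n m, pow_succ, mul_comm ((α.den:ℤ)^k) (α.den:ℤ)]
        exact mul_dvd_mul_left _ hS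
      have hcop : IsCoprime ((α.den : ℤ)^(k+1)) α.num := by
        rw [Int.isCoprime_iff_gcd_eq_one]
        have : Nat.Coprime (α.den^(k+1)) α.num.natAbs := (α.reduced.symm).pow_left _
        simpa [Int.gcd, Int.natAbs_pow] using this
      exact hcop.dvd_of_dvd_mul_left hdvd
  by_cases hden : α.den = 1
  · left
    exact ⟨α.num, by rw [← Rat.num_div_den α, hden]; simp⟩
  · right
    intro n m
    have hd2 : 2 ≤ α.den := by
      have := α.den_ne_zero
      omega
    have hz : X n - X m = 0 := by
      by_contra hz
      set z := X n - X m with hzdef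
      have hk := claim z.natAbs n m
      have hle : (α.den : ℤ)^z.natAbs ≤ |z| := Int.le_of_dvd (abs_pos.mpr hz) ((dvd_abs _ _).mpr hk)
      have h2 : (2:ℤ)^z.natAbs ≤ (α.den : ℤ)^z.natAbs := by
        apply pow_le_pow_left₀ (by norm_num)
        exact_mod_cast hd2
      have hlt : (z.natAbs : ℤ) < 2^z.natAbs := by
        exact_mod_cast (Nat.lt_two_pow_self (n := z.natAbs))
      have : |z| = (z.natAbs : ℤ) := (Int.abs_eq_natAbs z)
      omega
    rw [hX n, hX m]
    have : X n = X m := by omega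
    rw [this]


private lemma gcdMulLeft (k x y : ℤ) (hk : 0 ≤ k) :
    (Int.gcd (k*x) (k*y) : ℤ) = k * Int.gcd x y := by
  rw [Int.gcd_mul_left]; push_cast [Int.natAbs_of_nonneg hk]; ring

private lemma arith_equiv (a b c : ℤ) (ha : 0 < a) (hb : 0 < b) (hc : 0 < c) :
    (b ∣ a*c ∧ b^2 ∣ (a+b)*(b+c)) ↔
    ((Int.gcd a b : ℤ) * (Int.gcd b c : ℤ)
        = b * (Int.gcd (Int.gcd a b : ℤ) c : ℤ) ∧
      (Int.gcd a b : ℤ) ^ 2 ∣ (a + b) * (Int.gcd (Int.gcd a b : ℤ) c : ℤ) ∧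
      (Int.gcd b c : ℤ) ^ 2 ∣ (b + c) * (Int.gcd (Int.gcd a b : ℤ) c : ℤ)) := by
  set p : ℤ := (Int.gcd a b : ℤ) with hp
  set q : ℤ := (Int.gcd b c : ℤ) with hq
  set d : ℤ := (Int.gcd p c : ℤ) with hd
  have hpa : p ∣ a := Int.gcd_dvd_left _ _
  have hpb : p ∣ b := Int.gcd_dvd_right _ _
  have hqb : q ∣ b := Int.gcd_dvd_left _ _
  have hqc : q ∣ c := Int.gcd_dvd_right _ _
  have hdp : d ∣ p := Int.gcd_dvd_left _ _
  have hdc : d ∣ c := Int.gcd_dvd_right _ _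
  have hda : d ∣ a := hdp.trans hpa
  have hdb : d ∣ b := hdp.trans hpb
  have hb0 : b ≠ 0 := hb.ne'
  have hd0 : d ≠ 0 := by
    have : Int.gcd p c ≠ 0 := fun h => hc.ne' (Int.gcd_eq_zero_iff.mp h).2
    simpa [hd] using this
  constructor
  · rintro ⟨H1, H2⟩
    obtain ⟨t, ht⟩ := H1
    have key : b ∣ a + t + c := by
      have h1 : (a+b)*(b+c) = b*(a + t + c) + b*b := by
        have : a*(b+c) = a*b + b*t := by rw [← ht]; ring
        nlinarith [this]
      have h2 : b*b ∣ b*(a+t+c) := by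
        have h' : b*b ∣ b*(a+t+c) + b*b := by
          rw [← h1, show b*b = b^2 by ring]; exact H2
        exact (dvd_add_left (dvd_refl (b*b))).mp h'
      exact (mul_dvd_mul_iff_left hb0).mp h2
    have hdt : d ∣ t := by
      have h3 : d ∣ a + t + c := hdb.trans key
      have h4 : d ∣ t + c := by
        have := h3.sub hda
        simpa [show a + t + c - a = t + c by ring] using this
      simpa using h4.sub hdc
    -- identity: p*q = gcd (gcd (a*b) (a*c)) (gcd (b*b) (b*c))
    have E1 : p * q = (Int.gcd (Int.gcd (a*b) (a*c) : ℤ) (Int.gcd (b*b) (b*c) : ℤ) : ℤ) := by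
      have e1 : (Int.gcd (a*b) (a*c) : ℤ) = a * q := gcdMulLeft a b c ha.le
      have e2 : (Int.gcd (b*b) (b*c) : ℤ) = b * q := gcdMulLeft b b c hb.le
      rw [e1, e2, show a * q = q * a by ring, show b * q = q * b by ring,
        gcdMulLeft q a b (by positivity)]
      ring
    have E2 : b * d = (Int.gcd (Int.gcd (b*a) (b*b) : ℤ) (b*c) : ℤ) := by
      have e1 : (Int.gcd (b*a) (b*b) : ℤ) = b * p := by
        rw [gcdMulLeft b a b hb.le]
      rw [e1, gcdMulLeft b p c hb.le]
    have hbd_pq : b * d ∣ p * q := by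
      rw [E1]
      refine Int.dvd_coe_gcd (Int.dvd_coe_gcd ?_ ?_) (Int.dvd_coe_gcd ?_ ?_)
      · rw [mul_comm a b]; exact mul_dvd_mul_left b hda
      · rw [ht]; exact mul_dvd_mul_left b hdt
      · exact mul_dvd_mul_left b hdb
      · exact mul_dvd_mul_left b hdc
    have hpq_bd : p * q ∣ b * d := by
      rw [E2]
      refine Int.dvd_coe_gcd (Int.dvd_coe_gcd ?_ ?_) ?_
      · rw [mul_comm b a]; exact mul_dvd_mul hpa hqb
      · exact mul_dvd_mul hpb hqb
      · exact mul_dvd_mul hpb hqc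
    have hi : p * q = b * d := Int.dvd_antisymm (by positivity) (by positivity) hpq_bd hbd_pq
    refine ⟨hi, ?_, ?_⟩
    · -- p^2 ∣ (a+b)*d
      have h5 : p * b ∣ (a+b) * q := by
        have E3 : (a+b) * q = (Int.gcd ((a+b)*b) ((a+b)*c) : ℤ) := (gcdMulLeft (a+b) b c (by positivity)).symm
        rw [E3]
        refine Int.dvd_coe_gcd ?_ ?_
        · rw [mul_comm (a+b) b, mul_comm p b]
          exact mul_dvd_mul_left b (hpa.add hpb)
        · have e' : (a+b)*c = b*(t+c) := by rw [add_mul, ht]; ring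
          rw [e', mul_comm p b]
          have hptc : p ∣ t + c := by
            have h3 : p ∣ a + t + c := hpb.trans key
            have := h3.sub hpa
            simpa [show a + t + c - a = t + c by ring] using this
          exact mul_dvd_mul_left b hptc
      have h6 : p * (p * b) ∣ p * ((a+b) * q) := mul_dvd_mul_left p h5
      have h7 : p * ((a+b)*q) = b * ((a+b)*d) := by rw [show p*((a+b)*q) = (a+b)*(p*q) by ring, hi]; ring
      rw [h7, show p*(p*b) = b*(p^2) by ring] at h6
      exact (mul_dvd_mul_iff_left hb0).mp h6
    · -- q^2 ∣ (b+c)*d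
      have h5 : q * b ∣ (b+c) * p := by
        have E4 : (b+c) * p = (Int.gcd ((b+c)*a) ((b+c)*b) : ℤ) := (gcdMulLeft (b+c) a b (by positivity)).symm
        rw [E4]
        refine Int.dvd_coe_gcd ?_ ?_
        · have e' : (b+c)*a = b*(a+t) := by nlinarith [ht]
          rw [e', mul_comm q b]
          have hqat : q ∣ a + t := by
            have h3 : q ∣ a + t + c := hqb.trans key
            have := h3.sub hqc
            simpa [show a + t + c - c = a + t by ring] using this
          exact mul_dvd_mul_left b hqat
        · rw [mul_comm (b+c) b, mul_comm q b]
          exact mul_dvd_mul_left b (hqb.add hqc)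
      have h6 : q * (q * b) ∣ q * ((b+c) * p) := mul_dvd_mul_left q h5
      have h7 : q * ((b+c)*p) = b * ((b+c)*d) := by rw [show q*((b+c)*p) = (b+c)*(p*q) by ring, hi]; ring
      rw [h7, show q*(q*b) = b*(q^2) by ring] at h6
      exact (mul_dvd_mul_iff_left hb0).mp h6
  · rintro ⟨h1, h2, h3⟩
    have hpq_ac : p * q ∣ a * c := mul_dvd_mul hpa hqc
    refine ⟨(dvd_mul_right b d).trans (h1 ▸ hpq_ac), ?_⟩
    have hmul : (p^2) * (q^2) ∣ ((a+b)*d) * ((b+c)*d) := mul_dvd_mul h2 h3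
    have e : (p^2)*(q^2) = (d^2) * (b^2) := by
      have h' : (p*q)*(p*q) = (b*d)*(b*d) := by rw [h1]
      nlinarith [h']
    rw [e, show ((a+b)*d) * ((b+c)*d) = (d^2) * ((a+b)*(b+c)) by ring] at hmul
    have hd2 : (d^2 : ℤ) ≠ 0 := pow_ne_zero _ hd0
    exact (mul_dvd_mul_iff_left hd2).mp hmul


/-- Integrality Criterion 2: for positive integers `a, b, c`, the lens
sequence extended from the seed `(a,b,c)` is integer at every index iff, with
`d = gcd(a,b,c)`: (i) `gcd(a,b)·gcd(b,c) = b·d`, (ii) `gcd(a,b)² ∣ (a+b)·d`, and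
(iii) `gcd(b,c)² ∣ (b+c)·d`. -/
theorem lens_sequence_integrality_criterion_two
    (a b c : ℤ) (ha : 0 < a) (hb : 0 < b) (hc : 0 < c) :
    (∀ x : ℤ → ℚ, x 0 = (a : ℚ) → x 1 = (b : ℚ) → x 2 = (c : ℚ) →
      (∀ n : ℤ, x (n + 1) = (((a : ℚ) * b + b * c + c * a) / (b : ℚ) ^ 2 - 1) * x n
        - x (n - 1) + ((b : ℚ) ^ 2 - (a : ℚ) * c) / (b : ℚ)) →
      ∀ n : ℤ, ∃ m : ℤ, x n = (m : ℚ)) ↔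
    ((Int.gcd a b : ℤ) * (Int.gcd b c : ℤ)
        = b * (Int.gcd (Int.gcd a b : ℤ) c : ℤ) ∧
      (Int.gcd a b : ℤ) ^ 2 ∣ (a + b) * (Int.gcd (Int.gcd a b : ℤ) c : ℤ) ∧
      (Int.gcd b c : ℤ) ^ 2 ∣ (b + c) * (Int.gcd (Int.gcd a b : ℤ) c : ℤ)) := by
  have hb0 : (b:ℚ) ≠ 0 := by exact_mod_cast hb.ne'
  set α : ℚ := ((a : ℚ) * b + b * c + c * a) / (b : ℚ) ^ 2 - 1 with hαdef
  set β : ℚ := ((b : ℚ) ^ 2 - (a : ℚ) * c) / (b : ℚ) with hβdef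
  rw [← arith_equiv a b c ha hb hc]
  constructor
  · intro H
    set x : ℤ → ℚ := lensX α β (a:ℚ) (b:ℚ) with hxdef
    have hx0 : x 0 = (a:ℚ) := by
      have := lensX_nat α β (a:ℚ) (b:ℚ) 0
      simpa [lensF] using this
    have hx1 : x 1 = (b:ℚ) := by
      have := lensX_nat α β (a:ℚ) (b:ℚ) 1
      simpa [lensF] using this
    have hx2 : x 2 = (c:ℚ) := by
      have h := lensX_nat α β (a:ℚ) (b:ℚ) 2
      have h2 : lensF α β (a:ℚ) (b:ℚ) 2 = α * b - a + β := by
        show lensF α β (a:ℚ) (b:ℚ) (0+2) = _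
        rw [lensF]
        simp [lensF]
      have h3 : x 2 = α * b - a + β := by
        rw [hxdef, show (2:ℤ) = ((2:ℕ):ℤ) by norm_num, h, h2]
      rw [h3, hαdef, hβdef]
      field_simp
      ring
    have hxr : ∀ n : ℤ, x (n+1) = α * x n - x (n-1) + β := lensX_rec α β (a:ℚ) (b:ℚ)
    have hint := H x hx0 hx1 hx2 hxr
    rcases lens_alpha_int x α β hxr hint with ⟨A, hA⟩ | hconst
    · -- α = A integer
      have hβ : β = ((c + a - A*b : ℤ):ℚ) := by
        have h := hxr 1
        rw [show (1:ℤ)+1 = 2 by norm_num, show (1:ℤ)-1 = 0 by norm_num, hx0, hx1, hx2, hA] at h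
        push_cast
        linarith
      constructor
      · -- b ∣ a*c
        have h : ((b:ℚ)^2 - a*c) / b = ((c + a - A*b : ℤ):ℚ) := by rw [← hβdef, hβ]
        have h2 : ((b:ℚ))^2 - a*c = (c + a - A*b) * b := by
          field_simp at h
          push_cast at h
          linarith
        have h3 : b^2 - a*c = (c + a - A*b) * b := by exact_mod_cast h2
        refine ⟨b - (c + a - A*b), ?_⟩
        nlinarith [h3]
      · -- b^2 ∣ (a+b)*(b+c)
        have h : ((a:ℚ)*b + b*c + c*a) / (b:ℚ)^2 - 1 = (A:ℚ) := by rw [← hαdef, hA]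
        have h2 : (a:ℚ)*b + b*c + c*a = (A+1) * b^2 := by
          field_simp at h
          linarith
        have h3 : a*b + b*c + c*a = (A+1) * b^2 := by exact_mod_cast h2
        refine ⟨A + 2, ?_⟩
        nlinarith [h3]
    · -- constant sequence : a = b = c
      have hab : a = b := by
        have := hconst 0 1
        rw [hx0, hx1] at this
        exact_mod_cast this
      have hac : a = c := by
        have := hconst 0 2
        rw [hx0, hx2] at this
        exact_mod_cast this
      subst hab
      subst hac
      exact ⟨⟨a, by ring⟩, ⟨4, by ring⟩⟩
  · rintro ⟨⟨t, ht⟩, ⟨A, hA2⟩⟩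
    intro x hx0 hx1 hx2 hxr
    have hαA : α = ((A - 2 : ℤ):ℚ) := by
      have h : ((a:ℚ)+b)*((b:ℚ)+c) = (b:ℚ)^2 * (A:ℚ) := by exact_mod_cast hA2
      rw [hαdef]
      push_cast
      field_simp
      nlinarith [h]
    have hβB : β = ((b - t : ℤ):ℚ) := by
      have h : (a:ℚ)*c = (b:ℚ)*(t:ℚ) := by exact_mod_cast ht
      rw [hβdef]
      push_cast
      field_simp
      nlinarith [h]
    have hxr2 : ∀ n : ℤ, x (n+1) = ((A - 2 : ℤ):ℚ) * x n - x (n-1) + ((b - t : ℤ):ℚ) := by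
      intro n
      rw [← hαA, ← hβB]
      exact hxr n
    exact lens_int_valued x (A-2) (b-t) a b hx0 hx1 hxr2
end

section
/- Let b : ℤ → ℚ with b(n) ≠ 0 for all n satisfy the lens recurrence b(n+1) = α·b(n) − b(n−1) + β for all n ∈ ℤ, together with the compatibility condition b(n₀)² + b(n₀+1)² = α·b(n₀)·b(n₀+1) + β·(b(n₀) + b(n₀+1)) at some index n₀. Then b satisfies the nonlinear four-step recurrence: for all n ∈ ℤ, b(n−1)·b(n+2) = (b(n) − β)·(b(n+1) − β). -/
/-- A nowhere-vanishing lens sequence with the compatibility condition at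
some index satisfies the nonlinear four-step recurrence
`b (n-1) * b (n+2) = (b n - β) * (b (n+1) - β)`. -/
theorem lens_recurrence_nonlinear_four_step
    (b : ℤ → ℚ) (α β : ℚ) (hb : ∀ n : ℤ, b n ≠ 0)
    (hrec : ∀ n : ℤ, b (n + 1) = α * b n - b (n - 1) + β)
    (n₀ : ℤ)
    (hcomp : (b n₀) ^ 2 + (b (n₀ + 1)) ^ 2
      = α * b n₀ * b (n₀ + 1) + β * (b n₀ + b (n₀ + 1))) :
    ∀ n : ℤ, b (n - 1) * b (n + 2) = (b n - β) * (b (n + 1) - β) := by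
  have hall : ∀ n : ℤ, (b n) ^ 2 + (b (n + 1)) ^ 2
      = α * b n * b (n + 1) + β * (b n + b (n + 1)) := by
    intro n
    induction n using Int.inductionOn' (b := n₀) with
    | zero => exact hcomp
    | succ k _ ih =>
      have h2 : b (k + 1 + 1) = α * b (k + 1) - b k + β := by
        have := hrec (k + 1)
        simpa using this
      rw [h2]
      linear_combination ih
    | pred k _ ih =>
      have e : b (k - 1 + 1) = b k := by norm_num
      rw [e]
      have h2 : b (k - 1) = α * b k - b (k + 1) + β := by
        have := hrec k
        linarith
      rw [h2]
      linear_combination ih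
  intro n
  have h1 : b (n - 1) = α * b n - b (n + 1) + β := by
    have := hrec n; linarith
  have h2 : b (n + 2) = α * b (n + 1) - b n + β := by
    have := hrec (n + 1)
    have e : (n : ℤ) + 1 + 1 = n + 2 := by ring
    have e2 : (n : ℤ) + 1 - 1 = n := by ring
    rw [e, e2] at this
    exact this
  rw [h1, h2]
  linear_combination (-α) * hall n
end

section
/- Let b : ℤ → ℚ with b(n) ≠ 0 for all n satisfy the lens recurrence b(n+1) = α·b(n) − b(n−1) + β for all n ∈ ℤ, together with the compatibility condition at some index, and let f : ℤ → ℚ with f(n) ≠ 0 for all n satisfy b(n) = f(n−1)·f(n) for all n. Then the vector (f(n+1), −f(n−1)) is an eigenvector of the matrix [[b(n+1), b(n+2)], [b(n−1), b(n)]] with eigenvalue β: for all n ∈ ℤ, b(n+1)·f(n+1) − b(n+2)·f(n−1) = β·f(n+1) and b(n−1)·f(n+1) − b(n)·f(n−1) = −β·f(n−1). -/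
/-- If `f` is an underground sequence of a lens sequence `b`, then
`(f (n+1), -f (n-1))` is an eigenvector of `[[b (n+1), b (n+2)], [b (n-1), b n]]` with
eigenvalue `β`. -/
theorem underground_eigenvector
    (b : ℤ → ℚ) (α β : ℚ) (hb : ∀ n : ℤ, b n ≠ 0)
    (hrec : ∀ n : ℤ, b (n + 1) = α * b n - b (n - 1) + β)
    (n₀ : ℤ)
    (hcomp : (b n₀) ^ 2 + (b (n₀ + 1)) ^ 2
      = α * b n₀ * b (n₀ + 1) + β * (b n₀ + b (n₀ + 1)))
    (f : ℤ → ℚ) (hf : ∀ n : ℤ, f n ≠ 0)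
    (hfac : ∀ n : ℤ, b n = f (n - 1) * f n) :
    ∀ n : ℤ, b (n + 1) * f (n + 1) - b (n + 2) * f (n - 1) = β * f (n + 1) ∧
      b (n - 1) * f (n + 1) - b n * f (n - 1) = -β * f (n - 1) := by
  -- recurrence in a convenient form
  have hrec' : ∀ n : ℤ, b (n + 2) = α * b (n + 1) - b n + β := by
    intro n
    have h := hrec (n + 1)
    rw [show n + 1 + 1 = n + 2 by ring, show n + 1 - 1 = n by ring] at h
    exact h
  -- compatibility propagates to all indices
  have hstepF : ∀ k : ℤ, (b k) ^ 2 + (b (k + 1)) ^ 2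
      = α * b k * b (k + 1) + β * (b k + b (k + 1)) →
      (b (k + 1)) ^ 2 + (b (k + 2)) ^ 2
      = α * b (k + 1) * b (k + 2) + β * (b (k + 1) + b (k + 2)) := by
    intro k hk
    have h2 := hrec' k
    linear_combination hk + (b (k + 2) - b k) * h2
  have hstepB : ∀ k : ℤ, (b (k + 1)) ^ 2 + (b (k + 2)) ^ 2
      = α * b (k + 1) * b (k + 2) + β * (b (k + 1) + b (k + 2)) →
      (b k) ^ 2 + (b (k + 1)) ^ 2
      = α * b k * b (k + 1) + β * (b k + b (k + 1)) := by
    intro k hk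
    have h2 := hrec' k
    linear_combination hk - (b (k + 2) - b k) * h2
  have hcompAll : ∀ n : ℤ, (b n) ^ 2 + (b (n + 1)) ^ 2
      = α * b n * b (n + 1) + β * (b n + b (n + 1)) := by
    have key : ∀ m : ℤ, (b (n₀ + m)) ^ 2 + (b (n₀ + m + 1)) ^ 2
        = α * b (n₀ + m) * b (n₀ + m + 1) + β * (b (n₀ + m) + b (n₀ + m + 1)) := by
      intro m
      induction m using Int.induction_on with
      | zero => simpa using hcomp
      | succ k ih =>
        have := hstepF (n₀ + k) ih
        rw [show n₀ + k + 2 = n₀ + (k + 1) + 1 by ring, show n₀ + k + 1 = n₀ + (k + 1) by ring] at this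
        exact this
      | pred k ih =>
        have ih' : (b (n₀ + (-k - 1) + 1)) ^ 2 + (b (n₀ + (-k - 1) + 2)) ^ 2
            = α * b (n₀ + (-k - 1) + 1) * b (n₀ + (-k - 1) + 2)
              + β * (b (n₀ + (-k - 1) + 1) + b (n₀ + (-k - 1) + 2)) := by
          rw [show n₀ + (-k - 1) + 1 = n₀ + -k by ring, show n₀ + (-k - 1) + 2 = n₀ + -k + 1 by ring]
          exact ih
        have := hstepB (n₀ + (-k - 1)) ih'
        rw [show n₀ + (-k - 1) = n₀ + (-(k : ℤ) - 1) by ring] at this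
        exact this
    intro n
    have := key (n - n₀)
    rw [show n₀ + (n - n₀) = n by ring] at this
    exact this
  -- the key identity on f
  have hfac' : ∀ n : ℤ, b (n + 1) = f n * f (n + 1) := by
    intro n
    have h := hfac (n + 1)
    rw [show n + 1 - 1 = n by ring] at h
    exact h
  have hkey : ∀ n : ℤ, f (n - 1) * f (n + 2) = b (n + 1) - β := by
    intro n
    have hbb : b n * b (n + 2) = b (n + 1) ^ 2 - β * b (n + 1) := by
      have h1 := hcompAll n
      have h2 := hrec' n
      linear_combination b n * h2 - h1
    have h : f n * (f (n + 1) * (f (n - 1) * f (n + 2)))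
        = f n * (f (n + 1) * (b (n + 1) - β)) := by
      have e1 := hfac n
      have e2 := hfac' n
      have e3 : b (n + 2) = f (n + 1) * f (n + 2) := by
        have h := hfac (n + 2)
        rw [show n + 2 - 1 = n + 1 by ring] at h
        exact h
      linear_combination hbb - b (n + 2) * e1 - f (n - 1) * f n * e3 + (b (n + 1) - β) * e2
    exact mul_left_cancel₀ (hf (n + 1)) (mul_left_cancel₀ (hf n) h)
  intro n
  have k1 := hkey n
  have k2 := hkey (n - 1)
  rw [show n - 1 + 2 = n + 1 by ring, show n - 1 - 1 = n - 2 by ring,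
    show n - 1 + 1 = n by ring] at k2
  have e0 : b (n - 1) = f (n - 2) * f (n - 1) := by
    have h := hfac (n - 1)
    rw [show n - 1 - 1 = n - 2 by ring] at h
    exact h
  have e1 := hfac n
  have e2 := hfac' n
  have e3 : b (n + 2) = f (n + 1) * f (n + 2) := by
    have h := hfac (n + 2)
    rw [show n + 2 - 1 = n + 1 by ring] at h
    exact h
  constructor
  · calc b (n + 1) * f (n + 1) - b (n + 2) * f (n - 1)
        = f (n + 1) * (f n * f (n + 1) - f (n - 1) * f (n + 2)) := by rw [e2, e3]; ring
      _ = f (n + 1) * (b (n + 1) - (b (n + 1) - β)) := by rw [← e2, k1]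
      _ = β * f (n + 1) := by ring
  · calc b (n - 1) * f (n + 1) - b n * f (n - 1)
        = f (n - 1) * (f (n - 2) * f (n + 1) - f (n - 1) * f n) := by rw [e0, e1]; ring
      _ = f (n - 1) * ((b n - β) - b n) := by rw [← e1, k2]
      _ = -β * f (n - 1) := by ring
end
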